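/- arXiv:2301.00586 — 2 statements merged into one kernel-verified Lean document; each statement's English description precedes it below -/
import Mathlib

section
/- Fix z₀ ∈ ℂ with Im z₀ > 0 and let λ ∈ ℂ. Set s⁺ := D(λ, conj z₀) / (2i·Im(z₀)·‖𝔭_{z₀}‖²), s⁻ := −D(λ, z₀) / (2i·Im(z₀)·‖𝔭_{z₀}‖²), r⁺ := C(λ, conj z₀) / (2i·Im(z₀)·‖𝔭_{z₀}‖²), and r⁻ := −C(λ, z₀) / (2i·Im(z₀)·‖𝔭_{z₀}‖²). Then 𝔭_λ − s⁺·𝔭_{z₀} − s⁻·𝔭_{conj z₀} ∈ D(T) and 𝔮_λ − r⁺·𝔭_{z₀} − r⁻·𝔭_{conj z₀} ∈ D(T). -/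
open Filter Topology MeasureTheory

noncomputable section

/-- Action of the Jacobi matrix `J` on a complex sequence:
`(Jc)ₙ = aₙ₋₁cₙ₋₁ + bₙcₙ + aₙcₙ₊₁` with `a₋₁ := 0`. -/
def jacobiMul (a b : ℕ → ℝ) (c : ℕ → ℂ) : ℕ → ℂ
  | 0 => (b 0 : ℂ) * c 0 + (a 0 : ℂ) * c 1
  | n + 1 => (a n : ℂ) * c n + (b (n + 1) : ℂ) * c (n + 1) + (a (n + 1) : ℂ) * c (n + 2)

/-- `jacobiGraph a b f g` means: `f` belongs to the domain `D(T)` of the closure `T` of the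
Jacobi matrix acting on the finitely supported sequences, and `T f = g`; i.e. there are
finitely supported sequences `u k → f` in `ℓ²` such that `J (u k) → g` in `ℓ²`. -/
def jacobiGraph (a b : ℕ → ℝ) (f g : ℕ → ℂ) : Prop :=
  ∃ u : ℕ → ℕ → ℂ,
    (∀ k, (Function.support (u k)).Finite) ∧
    (∀ k, Summable fun n => ‖u k n - f n‖ ^ 2) ∧
    Tendsto (fun k => ∑' n, ‖u k n - f n‖ ^ 2) atTop (𝓝 0) ∧
    (∀ k, Summable fun n => ‖jacobiMul a b (u k) n - g n‖ ^ 2) ∧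
    Tendsto (fun k => ∑' n, ‖jacobiMul a b (u k) n - g n‖ ^ 2) atTop (𝓝 0)

/-- Membership in the domain `D(T)` of the Jacobi operator. -/
def inDomT (a b : ℕ → ℝ) (f : ℕ → ℂ) : Prop := ∃ g, jacobiGraph a b f g

/-- The `ℓ²` norm of a complex sequence. -/
def l2norm (f : ℕ → ℂ) : ℝ := Real.sqrt (∑' n, ‖f n‖ ^ 2)

/-- The data of an indeterminate Hamburger moment problem: Jacobi parameters `a`, `b`,
the orthonormal polynomials `p` and second-kind polynomials `q` (as entire functions),
determined by the three-term recurrence, together with the indeterminacy condition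
`∑ₙ (|pₙ(z)|² + |qₙ(z)|²) < ∞` for all `z`. -/
structure JacobiSetup where
  a : ℕ → ℝ
  b : ℕ → ℝ
  ha : ∀ n, 0 < a n
  p : ℕ → ℂ → ℂ
  q : ℕ → ℂ → ℂ
  hp0 : ∀ z, p 0 z = 1
  hp1 : ∀ z, p 1 z = (z - (b 0 : ℂ)) / (a 0 : ℂ)
  hq0 : ∀ z, q 0 z = 0
  hq1 : ∀ z, q 1 z = 1 / (a 0 : ℂ)
  hrecp : ∀ n z, z * p (n + 1) z =
    (a (n + 1) : ℂ) * p (n + 2) z + (b (n + 1) : ℂ) * p (n + 1) z + (a n : ℂ) * p n z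
  hrecq : ∀ n z, z * q (n + 1) z =
    (a (n + 1) : ℂ) * q (n + 2) z + (b (n + 1) : ℂ) * q (n + 1) z + (a n : ℂ) * q n z
  indet : ∀ z : ℂ, Summable fun n => ‖p n z‖ ^ 2 + ‖q n z‖ ^ 2

/-- The Nevanlinna function `A(u,v)`. -/
def nevA (S : JacobiSetup) (u v : ℂ) : ℂ := (u - v) * ∑' k, S.q k u * S.q k v
/-- The Nevanlinna function `B(u,v)`. -/
def nevB (S : JacobiSetup) (u v : ℂ) : ℂ := -1 + (u - v) * ∑' k, S.p k u * S.q k v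
/-- The Nevanlinna function `C(u,v)`. -/
def nevC (S : JacobiSetup) (u v : ℂ) : ℂ := 1 + (u - v) * ∑' k, S.q k u * S.p k v
/-- The Nevanlinna function `D(u,v)`. -/
def nevD (S : JacobiSetup) (u v : ℂ) : ℂ := (u - v) * ∑' k, S.p k u * S.p k v

namespace Stmt7Aux

open scoped ENNReal

abbrev Hc : Type := lp (fun _ : ℕ => ℂ) 2
abbrev Ec : Type := WithLp 2 (Hc × Hc)

lemma rpow_two_eq (x : ℝ) : x ^ (2:ℝ≥0∞).toReal = x ^ 2 := by
  rw [show ((2:ℝ≥0∞).toReal) = ((2:ℕ):ℝ) by norm_num, Real.rpow_natCast]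

lemma memtwo (f : ℕ → ℂ) (h : Summable fun n => ‖f n‖ ^ 2) : Memℓp f 2 := by
  apply memℓp_gen
  convert h using 2 with n
  exact rpow_two_eq _

lemma summable_sq (f : Hc) : Summable fun n => ‖f n‖ ^ 2 := by
  have := (lp.memℓp f).summable (p := 2) (by norm_num)
  convert this using 2 with n
  exact (rpow_two_eq _).symm

lemma norm_sq_eq (f : Hc) : ‖f‖ ^ 2 = ∑' n, ‖f n‖ ^ 2 := by
  have := lp.norm_rpow_eq_tsum (p := 2) (by norm_num) f
  rw [rpow_two_eq _] at this
  rw [this]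
  exact tsum_congr fun n => rpow_two_eq _

def mk' (f : ℕ → ℂ) (h : Memℓp f 2) : Hc := ⟨f, h⟩

@[simp] lemma mk'_apply (f : ℕ → ℂ) (h : Memℓp f 2) (n : ℕ) : (mk' f h) n = f n := rfl

lemma inner_tsum' (u v : Hc) : (inner ℂ u v : ℂ) = ∑' n, (starRingEnd ℂ) (u n) * (v n) := by
  rw [lp.inner_eq_tsum]; exact tsum_congr fun n => RCLike.inner_apply' _ _

lemma hc_ext {u v : Hc} (h : ∀ n, u n = v n) : u = v := by
  apply lp.ext
  funext n
  exact h n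

variable {a b : ℕ → ℝ}

lemma jm_add (c d : ℕ → ℂ) (n : ℕ) :
    jacobiMul a b (fun m => c m + d m) n = jacobiMul a b c n + jacobiMul a b d n := by
  cases n <;> simp [jacobiMul] <;> ring

lemma jm_smul (μ : ℂ) (c : ℕ → ℂ) (n : ℕ) :
    jacobiMul a b (fun m => μ * c m) n = μ * jacobiMul a b c n := by
  cases n <;> simp [jacobiMul] <;> ring

lemma jm_sub (c d : ℕ → ℂ) (n : ℕ) :
    jacobiMul a b (fun m => c m - d m) n = jacobiMul a b c n - jacobiMul a b d n := by
  cases n <;> simp [jacobiMul] <;> ring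

lemma jm_congr {c d : ℕ → ℂ} (h : ∀ m, c m = d m) (n : ℕ) :
    jacobiMul a b c n = jacobiMul a b d n := by
  cases n <;> simp [jacobiMul, h]

lemma jm_conj (c : ℕ → ℂ) (n : ℕ) :
    jacobiMul a b (fun m => (starRingEnd ℂ) (c m)) n = (starRingEnd ℂ) (jacobiMul a b c n) := by
  cases n <;> simp [jacobiMul, map_add, map_mul, Complex.conj_ofReal]

lemma green_sum (a b : ℕ → ℝ) (d f : ℕ → ℂ) (M : ℕ) :
    ∑ n ∈ Finset.range (M + 1), (d n * jacobiMul a b f n - jacobiMul a b d n * f n)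
      = (a M : ℂ) * (d M * f (M + 1) - d (M + 1) * f M) := by
  induction M with
  | zero => simp [jacobiMul]; ring
  | succ M ih =>
      rw [Finset.sum_range_succ, ih]
      show _ + (d (M+1) * jacobiMul a b f (M+1) - jacobiMul a b d (M+1) * f (M+1)) = _
      simp only [jacobiMul]
      ring

lemma support_le {c : ℕ → ℂ} {N : ℕ} (hc : ∀ n, N ≤ n → c n = 0) (n : ℕ) (hn : N + 1 ≤ n) :
    jacobiMul a b c n = 0 := by
  obtain ⟨m, rfl⟩ : ∃ m, n = m + 1 := ⟨n - 1, by omega⟩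
  simp [jacobiMul, hc m (by omega), hc (m+1) (by omega), hc (m+2) (by omega)]

lemma green_tsum (a b : ℕ → ℝ) (c f : ℕ → ℂ) {N : ℕ} (hc : ∀ n, N ≤ n → c n = 0) :
    ∑' n, (starRingEnd ℂ) (c n) * jacobiMul a b f n
      = ∑' n, (starRingEnd ℂ) (jacobiMul a b c n) * f n := by
  set d := fun m => (starRingEnd ℂ) (c m) with hd
  have hdz : ∀ n, N ≤ n → d n = 0 := fun n hn => by simp [hd, hc n hn]
  have h1 : ∑' n, d n * jacobiMul a b f n
      = ∑ n ∈ Finset.range (N + 2), d n * jacobiMul a b f n := by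
    apply tsum_eq_sum
    intro n hn
    rw [hdz n (by simp [Finset.mem_range] at hn; omega)]
    ring
  have h2 : ∑' n, (starRingEnd ℂ) (jacobiMul a b c n) * f n
      = ∑ n ∈ Finset.range (N + 2), (starRingEnd ℂ) (jacobiMul a b c n) * f n := by
    apply tsum_eq_sum
    intro n hn
    have : jacobiMul a b c n = 0 := support_le hc n (by simp [Finset.mem_range] at hn; omega)
    simp [this]
  rw [h1, h2]
  have key := green_sum a b d f (N + 1)
  have hb : (a (N+1) : ℂ) * (d (N+1) * f (N + 2) - d (N + 2) * f (N+1)) = 0 := by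
    rw [hdz (N+1) (by omega), hdz (N+2) (by omega)]; ring
  rw [hb] at key
  have hcongr : ∀ n, (starRingEnd ℂ) (jacobiMul a b c n) = jacobiMul a b d n := fun n =>
    (jm_conj c n).symm
  simp_rw [hcongr]
  rw [Finset.sum_sub_distrib] at key
  rw [show N + 1 + 1 = N + 2 from rfl] at key
  linear_combination key

lemma exists_bound {c : ℕ → ℂ} (hc : (Function.support c).Finite) :
    ∃ N, ∀ n, N ≤ n → c n = 0 := by
  obtain ⟨N, hN⟩ := hc.bddAbove
  refine ⟨N + 1, fun n hn => ?_⟩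
  by_contra h
  have : n ∈ Function.support c := h
  have := hN this
  omega

lemma memfin {c : ℕ → ℂ} (hc : (Function.support c).Finite) : Memℓp c 2 := by
  apply memtwo
  apply summable_of_ne_finset_zero (s := hc.toFinset)
  intro n hn
  have : c n = 0 := by
    by_contra h
    exact hn (hc.mem_toFinset.mpr h)
  simp [this]

lemma jm_support {c : ℕ → ℂ} (hc : (Function.support c).Finite) :
    (Function.support (jacobiMul a b c)).Finite := by
  obtain ⟨N, hN⟩ := exists_bound hc
  apply Set.Finite.subset (Set.finite_Iio (N + 1))
  intro n hn
  simp only [Set.mem_Iio]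
  by_contra h
  exact hn (support_le hN n (by omega))

/-! ### Recurrence lemmas -/

lemma haC (S : JacobiSetup) (n : ℕ) : (S.a n : ℂ) ≠ 0 :=
  Complex.ofReal_ne_zero.mpr (S.ha n).ne'

lemma psolve (S : JacobiSetup) (n : ℕ) (z : ℂ) :
    S.p (n + 2) z = (z * S.p (n+1) z - (S.b (n+1) : ℂ) * S.p (n+1) z - (S.a n : ℂ) * S.p n z)
      / (S.a (n+1) : ℂ) := by
  rw [eq_div_iff (haC S (n+1))]
  linear_combination -(S.hrecp n z)

lemma qsolve (S : JacobiSetup) (n : ℕ) (z : ℂ) :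
    S.q (n + 2) z = (z * S.q (n+1) z - (S.b (n+1) : ℂ) * S.q (n+1) z - (S.a n : ℂ) * S.q n z)
      / (S.a (n+1) : ℂ) := by
  rw [eq_div_iff (haC S (n+1))]
  linear_combination -(S.hrecq n z)

lemma pconj (S : JacobiSetup) (z : ℂ) :
    ∀ n, S.p n ((starRingEnd ℂ) z) = (starRingEnd ℂ) (S.p n z) := by
  have key : ∀ n, S.p n ((starRingEnd ℂ) z) = (starRingEnd ℂ) (S.p n z) ∧
      S.p (n+1) ((starRingEnd ℂ) z) = (starRingEnd ℂ) (S.p (n+1) z) := by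
    intro n
    induction n with
    | zero =>
        refine ⟨by simp [S.hp0], ?_⟩
        rw [S.hp1, S.hp1, map_div₀, map_sub, Complex.conj_ofReal, Complex.conj_ofReal]
    | succ n ih =>
        refine ⟨ih.2, ?_⟩
        simp [psolve, ih.1, ih.2, map_div₀, Complex.conj_ofReal]
  exact fun n => (key n).1

lemma qconj (S : JacobiSetup) (z : ℂ) :
    ∀ n, S.q n ((starRingEnd ℂ) z) = (starRingEnd ℂ) (S.q n z) := by
  have key : ∀ n, S.q n ((starRingEnd ℂ) z) = (starRingEnd ℂ) (S.q n z) ∧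
      S.q (n+1) ((starRingEnd ℂ) z) = (starRingEnd ℂ) (S.q (n+1) z) := by
    intro n
    induction n with
    | zero =>
        refine ⟨by simp [S.hq0], ?_⟩
        rw [S.hq1, S.hq1, map_div₀, Complex.conj_ofReal, map_one]
    | succ n ih =>
        refine ⟨ih.2, ?_⟩
        simp [qsolve, ih.1, ih.2, map_div₀, Complex.conj_ofReal]
  exact fun n => (key n).1

lemma peigen (S : JacobiSetup) (z : ℂ) (n : ℕ) :
    jacobiMul S.a S.b (fun m => S.p m z) n = z * S.p n z := by
  cases n with
  | zero =>
      show (S.b 0 : ℂ) * S.p 0 z + (S.a 0 : ℂ) * S.p 1 z = z * S.p 0 z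
      rw [S.hp0, S.hp1]
      have h0 := haC S 0
      field_simp
      ring
  | succ n =>
      show (S.a n : ℂ) * S.p n z + (S.b (n+1) : ℂ) * S.p (n+1) z + (S.a (n+1) : ℂ) * S.p (n+2) z
        = z * S.p (n+1) z
      linear_combination (S.hrecp n z).symm

lemma qeigen (S : JacobiSetup) (z : ℂ) (n : ℕ) :
    jacobiMul S.a S.b (fun m => S.q m z) n = z * S.q n z + (if n = 0 then 1 else 0) := by
  cases n with
  | zero =>
      show (S.b 0 : ℂ) * S.q 0 z + (S.a 0 : ℂ) * S.q 1 z = z * S.q 0 z + 1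
      rw [S.hq0, S.hq1]
      have h0 := haC S 0
      field_simp
      ring
  | succ n =>
      show (S.a n : ℂ) * S.q n z + (S.b (n+1) : ℂ) * S.q (n+1) z + (S.a (n+1) : ℂ) * S.q (n+2) z
        = z * S.q (n+1) z + _
      simp only [Nat.succ_ne_zero, if_false, add_zero]
      linear_combination (S.hrecq n z).symm

lemma eigen_unique (S : JacobiSetup) (w : ℂ) (φ : ℕ → ℂ)
    (hφ : ∀ n, jacobiMul S.a S.b φ n = w * φ n) :
    ∀ n, φ n = φ 0 * S.p n w := by
  have key : ∀ n, φ n = φ 0 * S.p n w ∧ φ (n+1) = φ 0 * S.p (n+1) w := by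
    intro n
    induction n with
    | zero =>
        refine ⟨by simp [S.hp0], ?_⟩
        have h0 : (S.b 0 : ℂ) * φ 0 + (S.a 0 : ℂ) * φ 1 = w * φ 0 := hφ 0
        rw [S.hp1, mul_div_assoc', eq_div_iff (haC S 0)]
        linear_combination h0
    | succ n ih =>
        refine ⟨ih.2, ?_⟩
        have hthis : (S.a n : ℂ) * φ n + (S.b (n+1) : ℂ) * φ (n+1) + (S.a (n+1) : ℂ) * φ (n+2)
          = w * φ (n+1) := hφ (n+1)
        have e1 := S.hrecp n w
        apply mul_left_cancel₀ (haC S (n+1))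
        linear_combination hthis + φ 0 * e1 - (S.a n : ℂ) * ih.1
          - (S.b (n+1) : ℂ) * ih.2 + w * ih.2
  exact fun n => (key n).1

lemma psummable (S : JacobiSetup) (z : ℂ) : Summable fun n => ‖S.p n z‖ ^ 2 :=
  (S.indet z).of_nonneg_of_le (fun n => by positivity)
    (fun n => le_add_of_nonneg_right (by positivity))

lemma qsummable (S : JacobiSetup) (z : ℂ) : Summable fun n => ‖S.q n z‖ ^ 2 :=
  (S.indet z).of_nonneg_of_le (fun n => by positivity)
    (fun n => le_add_of_nonneg_left (by positivity))

def Pz (S : JacobiSetup) (z : ℂ) : Hc := mk' _ (memtwo _ (psummable S z))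
def Qz (S : JacobiSetup) (z : ℂ) : Hc := mk' _ (memtwo _ (qsummable S z))

@[simp] lemma Pz_apply (S : JacobiSetup) (z : ℂ) (n : ℕ) : Pz S z n = S.p n z := rfl
@[simp] lemma Qz_apply (S : JacobiSetup) (z : ℂ) (n : ℕ) : Qz S z n = S.q n z := rfl

/-! ### The graph of the minimal Jacobi operator -/

def GJ (a b : ℕ → ℝ) : Submodule ℂ Ec where
  carrier := {x | ∃ c : ℕ → ℂ, (Function.support c).Finite ∧
    (∀ n, x.fst n = c n) ∧ (∀ n, x.snd n = jacobiMul a b c n)}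
  add_mem' := by
    rintro x y ⟨c, hc, hc1, hc2⟩ ⟨d, hd, hd1, hd2⟩
    refine ⟨fun n => c n + d n, (hc.union hd).subset (fun n hn => ?_), fun n => ?_, fun n => ?_⟩
    · by_contra h
      simp only [Set.mem_union, Function.mem_support, not_or, not_not] at h
      simp only [Function.mem_support, h.1, h.2, add_zero, ne_eq, not_true_eq_false] at hn
    · have : (x + y).fst = x.fst + y.fst := rfl
      rw [this, lp.coeFn_add, Pi.add_apply, hc1, hd1]
    · have : (x + y).snd = x.snd + y.snd := rfl
      rw [this, lp.coeFn_add, Pi.add_apply, hc2, hd2, jm_add]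
  zero_mem' := by
    refine ⟨0, by simp, fun n => ?_, fun n => ?_⟩
    · have : (0 : Ec).fst = (0 : Hc) := rfl
      rw [this, lp.coeFn_zero]
    · have h0 : (0 : Ec).snd = (0 : Hc) := rfl
      have h2 : jacobiMul a b (0 : ℕ → ℂ) n = 0 := by cases n <;> simp [jacobiMul]
      rw [h0, lp.coeFn_zero, h2]
      rfl
  smul_mem' := by
    rintro μ x ⟨c, hc, hc1, hc2⟩
    refine ⟨fun n => μ * c n, hc.subset (fun n hn => ?_), fun n => ?_, fun n => ?_⟩
    · simp only [Function.mem_support] at hn ⊢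
      intro h
      exact hn (by rw [h, mul_zero])
    · have : (μ • x).fst = μ • x.fst := rfl
      rw [this, lp.coeFn_smul, Pi.smul_apply, hc1, smul_eq_mul]
    · have : (μ • x).snd = μ • x.snd := rfl
      rw [this, lp.coeFn_smul, Pi.smul_apply, hc2, jm_smul, smul_eq_mul]

/-! ### Elements of the graph and orthogonality -/

def gel (a b : ℕ → ℝ) (c : ℕ → ℂ) (hc : (Function.support c).Finite) : Ec :=
  (WithLp.equiv 2 (Hc × Hc)).symm
    (mk' c (memfin hc), mk' (jacobiMul a b c) (memfin (jm_support hc)))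

lemma gel_fst (a b : ℕ → ℝ) (c : ℕ → ℂ) (hc : (Function.support c).Finite) (n : ℕ) :
    (gel a b c hc).fst n = c n := rfl

lemma gel_snd (a b : ℕ → ℝ) (c : ℕ → ℂ) (hc : (Function.support c).Finite) (n : ℕ) :
    (gel a b c hc).snd n = jacobiMul a b c n := rfl

lemma gel_mem (a b : ℕ → ℝ) (c : ℕ → ℂ) (hc : (Function.support c).Finite) :
    gel a b c hc ∈ GJ a b :=
  ⟨c, hc, fun n => rfl, fun n => rfl⟩

def eseq (n : ℕ) : ℕ → ℂ := fun m => if m = n then 1 else 0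

lemma eseq_fin (n : ℕ) : (Function.support (eseq n)).Finite := by
  apply Set.Finite.subset (Set.finite_singleton n)
  intro m hm
  simp only [Function.mem_support, eseq] at hm
  by_contra h
  simp only [Set.mem_singleton_iff] at h
  simp [h] at hm

lemma eseq_bound (n : ℕ) : ∀ m, n + 1 ≤ m → eseq n m = 0 := by
  intro m hm
  simp only [eseq, if_neg (by omega : ¬ m = n)]

/-- `∑' m, conj (eseq n m) * g m = g n`. -/
lemma eseq_tsum (g : ℕ → ℂ) (n : ℕ) :
    ∑' m, (starRingEnd ℂ) (eseq n m) * g m = g n := by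
  rw [tsum_eq_single n]
  · simp [eseq]
  · intro m hm
    simp [eseq, if_neg hm]

lemma orth_fst_eq {a b : ℕ → ℝ} {u : Ec} (hu : u ∈ (GJ a b)ᗮ) (n : ℕ) :
    u.fst n = - jacobiMul a b (fun m => u.snd m) n := by
  have h := (Submodule.mem_orthogonal _ _).mp hu _ (gel_mem a b (eseq n) (eseq_fin n))
  rw [WithLp.prod_inner_apply, WithLp.ofLp_fst, WithLp.ofLp_snd, WithLp.ofLp_fst, WithLp.ofLp_snd, inner_tsum', inner_tsum'] at h
  have t1 : ∑' m, (starRingEnd ℂ) ((gel a b (eseq n) (eseq_fin n)).fst m) * (u.fst m) = u.fst n := by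
    simp_rw [show ∀ m, (gel a b (eseq n) (eseq_fin n)).fst m = eseq n m from fun m => rfl]
    exact eseq_tsum _ n
  have t2 : ∑' m, (starRingEnd ℂ) ((gel a b (eseq n) (eseq_fin n)).snd m) * (u.snd m)
      = jacobiMul a b (fun m => u.snd m) n := by
    simp_rw [show ∀ m, (gel a b (eseq n) (eseq_fin n)).snd m = jacobiMul a b (eseq n) m
      from fun m => rfl]
    rw [← green_tsum a b (eseq n) (fun m => u.snd m) (eseq_bound n)]
    exact eseq_tsum _ n
  rw [t1, t2] at h
  linear_combination h

/-- The two inner-product identities from Green's identity, for a finitely supported `c`. -/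
lemma green_inner {a b : ℕ → ℝ} (c : ℕ → ℂ) (hc : (Function.support c).Finite)
    (f : ℕ → ℂ) (hf : Memℓp f 2) (hJf : Memℓp (jacobiMul a b f) 2) :
    (inner ℂ (mk' c (memfin hc)) (mk' _ hJf) : ℂ)
      = inner ℂ (mk' (jacobiMul a b c) (memfin (jm_support hc))) (mk' f hf) := by
  rw [inner_tsum', inner_tsum']
  obtain ⟨N, hN⟩ := exists_bound hc
  exact green_tsum a b c f hN

/-- The vector `(J f, -f)` is in the orthogonal complement of the graph. -/
lemma wprime_mem {a b : ℕ → ℝ} (f : ℕ → ℂ) (hf : Memℓp f 2)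
    (hJf : Memℓp (jacobiMul a b f) 2) :
    ((WithLp.equiv 2 (Hc × Hc)).symm (mk' _ hJf, - mk' f hf)) ∈ (GJ a b)ᗮ := by
  rw [Submodule.mem_orthogonal]
  rintro v ⟨c, hcfin, h1, h2⟩
  rw [WithLp.prod_inner_apply, WithLp.ofLp_fst, WithLp.ofLp_snd, WithLp.ofLp_fst, WithLp.ofLp_snd]
  have e1 : (((WithLp.equiv 2 (Hc × Hc)).symm (mk' _ hJf, - mk' f hf)).fst : Hc) = mk' _ hJf := rfl
  have e2 : (((WithLp.equiv 2 (Hc × Hc)).symm (mk' _ hJf, - mk' f hf)).snd : Hc) = - mk' f hf := rfl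
  rw [e1, e2, inner_neg_right, inner_tsum', inner_tsum']
  have t1 : ∑' n, (starRingEnd ℂ) (v.fst n) * ((mk' _ hJf) n)
      = ∑' n, (starRingEnd ℂ) (c n) * jacobiMul a b f n := by
    apply tsum_congr; intro n; rw [h1]; rfl
  have t2 : ∑' n, (starRingEnd ℂ) (v.snd n) * ((mk' f hf) n)
      = ∑' n, (starRingEnd ℂ) (jacobiMul a b c n) * f n := by
    apply tsum_congr; intro n; rw [h2]; rfl
  rw [t1, t2]
  obtain ⟨N, hN⟩ := exists_bound hcfin
  rw [green_tsum a b c f hN]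
  ring

/-! ### Lower bounds and closure properties -/

set_option synthInstance.maxHeartbeats 1000000 in
instance : FrechetUrysohnSpace Ec := inferInstance

lemma imz_bound {x y : Hc} (hreal : (inner ℂ x y : ℂ) = (starRingEnd ℂ) (inner ℂ x y : ℂ))
    (z : ℂ) : |z.im| * ‖x‖ ≤ ‖y - z • x‖ := by
  rcases eq_or_ne x 0 with rfl | hx
  · simp
  have hx' : 0 < ‖x‖ := norm_pos_iff.mpr hx
  have him : (inner ℂ x y : ℂ).im = 0 := by
    have h := congrArg Complex.im hreal
    rw [Complex.conj_im] at h
    linarith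
  have hinner : (inner ℂ x (y - z • x) : ℂ) = inner ℂ x y - z * ((‖x‖^2 : ℝ) : ℂ) := by
    rw [inner_sub_right, inner_smul_right, inner_self_eq_norm_sq_to_K]
    norm_cast
  have him2 : |(inner ℂ x (y - z • x) : ℂ).im| = |z.im| * ‖x‖^2 := by
    rw [hinner, Complex.sub_im, him, Complex.mul_im, Complex.ofReal_re, Complex.ofReal_im,
      mul_zero, zero_add, zero_sub, abs_neg, abs_mul, abs_of_nonneg (sq_nonneg ‖x‖)]
  have hcs : |(inner ℂ x (y - z • x) : ℂ).im| ≤ ‖x‖ * ‖y - z • x‖ := by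
    calc |(inner ℂ x (y - z • x) : ℂ).im| ≤ ‖(inner ℂ x (y - z • x) : ℂ)‖ :=
          Complex.abs_im_le_norm _
    _ = ‖(inner ℂ x (y - z • x) : ℂ)‖ := rfl
    _ ≤ ‖x‖ * ‖y - z • x‖ := norm_inner_le_norm _ _
  rw [him2] at hcs
  nlinarith [hcs, hx', abs_nonneg z.im]

lemma graph_inner_real {a b : ℕ → ℝ} {v : Ec} (hv : v ∈ GJ a b) :
    (inner ℂ v.fst v.snd : ℂ) = (starRingEnd ℂ) (inner ℂ v.fst v.snd : ℂ) := by
  obtain ⟨c, hc, h1, h2⟩ := hv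
  obtain ⟨N, hN⟩ := exists_bound hc
  have key : (inner ℂ v.fst v.snd : ℂ) = (inner ℂ v.snd v.fst : ℂ) := by
    rw [inner_tsum', inner_tsum']
    have t1 : ∑' n, (starRingEnd ℂ) (v.fst n) * (v.snd n)
        = ∑' n, (starRingEnd ℂ) (c n) * jacobiMul a b c n := by
      apply tsum_congr; intro n; rw [h1, h2]
    have t2 : ∑' n, (starRingEnd ℂ) (v.snd n) * (v.fst n)
        = ∑' n, (starRingEnd ℂ) (jacobiMul a b c n) * c n := by
      apply tsum_congr; intro n; rw [h1, h2]
    rw [t1, t2]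
    exact green_tsum a b c c hN
  conv_lhs => rw [key]
  exact (inner_conj_symm (𝕜 := ℂ) v.snd v.fst).symm

lemma fst_norm_le (w : Ec) : ‖w.fst‖ ≤ ‖w‖ := by
  have h := WithLp.prod_norm_sq_eq_of_L2 w
  nlinarith [norm_nonneg w, norm_nonneg w.fst, norm_nonneg w.snd]

lemma snd_norm_le (w : Ec) : ‖w.snd‖ ≤ ‖w‖ := by
  have h := WithLp.prod_norm_sq_eq_of_L2 w
  nlinarith [norm_nonneg w, norm_nonneg w.fst, norm_nonneg w.snd]

lemma norm_le_add (w : Ec) : ‖w‖ ≤ ‖w.fst‖ + ‖w.snd‖ := by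
  have h := WithLp.prod_norm_sq_eq_of_L2 w
  nlinarith [norm_nonneg w, norm_nonneg w.fst, norm_nonneg w.snd]

lemma comp_tendsto_fst {x : ℕ → Ec} {u : Ec} (hx : Filter.Tendsto x Filter.atTop (nhds u)) :
    Filter.Tendsto (fun j => (x j).fst) Filter.atTop (nhds u.fst) := by
  rw [tendsto_iff_norm_sub_tendsto_zero] at hx ⊢
  apply squeeze_zero (fun j => norm_nonneg _) _ hx
  intro j
  have : (x j).fst - u.fst = (x j - u).fst := (WithLp.sub_fst _ _).symm
  rw [this]
  exact fst_norm_le _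

lemma comp_tendsto_snd {x : ℕ → Ec} {u : Ec} (hx : Filter.Tendsto x Filter.atTop (nhds u)) :
    Filter.Tendsto (fun j => (x j).snd) Filter.atTop (nhds u.snd) := by
  rw [tendsto_iff_norm_sub_tendsto_zero] at hx ⊢
  apply squeeze_zero (fun j => norm_nonneg _) _ hx
  intro j
  have : (x j).snd - u.snd = (x j - u).snd := (WithLp.sub_snd _ _).symm
  rw [this]
  exact snd_norm_le _

lemma lp_apply_tendsto {x : ℕ → Hc} {u : Hc} (hx : Filter.Tendsto x Filter.atTop (nhds u))
    (m : ℕ) : Filter.Tendsto (fun j => x j m) Filter.atTop (nhds (u m)) := by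
  rw [tendsto_iff_norm_sub_tendsto_zero] at hx ⊢
  apply squeeze_zero (fun j => norm_nonneg _) _ hx
  intro j
  have : x j m - u m = (x j - u) m := by rw [lp.coeFn_sub, Pi.sub_apply]
  rw [this]
  exact lp.norm_apply_le_norm (by norm_num) _ m

lemma jm_tendsto {a b : ℕ → ℝ} {φ : ℕ → ℕ → ℂ} {f : ℕ → ℂ}
    (h : ∀ m, Filter.Tendsto (fun k => φ k m) Filter.atTop (nhds (f m))) (n : ℕ) :
    Filter.Tendsto (fun k => jacobiMul a b (φ k) n) Filter.atTop (nhds (jacobiMul a b f n)) := by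
  cases n with
  | zero =>
      simp only [jacobiMul]
      exact ((h 0).const_mul _).add ((h 1).const_mul _)
  | succ n =>
      simp only [jacobiMul]
      exact ((((h n).const_mul _).add ((h (n+1)).const_mul _))).add ((h (n+2)).const_mul _)

lemma K_bound {a b : ℕ → ℝ} (z : ℂ) {u : Ec} (hu : u ∈ (GJ a b).topologicalClosure) :
    |z.im| * ‖u.fst‖ ≤ ‖u.snd - z • u.fst‖ := by
  have hset : u ∈ closure (GJ a b : Set Ec) := by
    rw [← Submodule.topologicalClosure_coe]; exact hu
  obtain ⟨x, hx, hlim⟩ := mem_closure_iff_seq_limit.mp hset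
  have h1 := comp_tendsto_fst hlim
  have h2 := comp_tendsto_snd hlim
  have hb : ∀ j, |z.im| * ‖(x j).fst‖ ≤ ‖(x j).snd - z • (x j).fst‖ :=
    fun j => imz_bound (graph_inner_real (hx j)) z
  have hL : Filter.Tendsto (fun j => |z.im| * ‖(x j).fst‖) Filter.atTop (nhds (|z.im| * ‖u.fst‖)) :=
    (h1.norm).const_mul _
  have hR : Filter.Tendsto (fun j => ‖(x j).snd - z • (x j).fst‖) Filter.atTop
      (nhds ‖u.snd - z • u.fst‖) := (h2.sub (h1.const_smul z)).norm
  exact le_of_tendsto_of_tendsto' hL hR hb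

lemma K_pointwise {a b : ℕ → ℝ} {u : Ec} (hu : u ∈ (GJ a b).topologicalClosure) (n : ℕ) :
    u.snd n = jacobiMul a b (fun m => u.fst m) n := by
  have hset : u ∈ closure (GJ a b : Set Ec) := by
    rw [← Submodule.topologicalClosure_coe]; exact hu
  obtain ⟨x, hx, hlim⟩ := mem_closure_iff_seq_limit.mp hset
  have h1 := comp_tendsto_fst hlim
  have h2 := comp_tendsto_snd hlim
  have hgel : ∀ j, (x j).snd n = jacobiMul a b (fun m => (x j).fst m) n := by
    intro j
    obtain ⟨c, hc, e1, e2⟩ := hx j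
    rw [e2 n]
    exact jm_congr (fun m => (e1 m).symm) n
  have hA : Filter.Tendsto (fun j => (x j).snd n) Filter.atTop (nhds (u.snd n)) :=
    lp_apply_tendsto h2 n
  have hB : Filter.Tendsto (fun j => (x j).snd n) Filter.atTop
      (nhds (jacobiMul a b (fun m => u.fst m) n)) := by
    have := jm_tendsto (a := a) (b := b) (φ := fun j m => (x j).fst m) (f := fun m => u.fst m)
      (fun m => lp_apply_tendsto h1 m) n
    apply this.congr
    intro j
    exact (hgel j).symm
  exact tendsto_nhds_unique hA hB

/-! ### The deficiency decomposition -/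

def Lz (z : ℂ) : Ec →ₗ[ℂ] Hc where
  toFun u := u.snd - z • u.fst
  map_add' u v := by
    show (u + v).snd - z • (u + v).fst = _
    rw [WithLp.add_fst, WithLp.add_snd, smul_add]
    abel
  map_smul' c u := by
    show (c • u).snd - z • (c • u).fst = c • (u.snd - z • u.fst)
    rw [WithLp.smul_fst, WithLp.smul_snd, smul_sub, smul_comm z c]

lemma R_closed {a b : ℕ → ℝ} (z : ℂ) (hz : z.im ≠ 0) :
    IsClosed ((Submodule.map (Lz z) ((GJ a b).topologicalClosure) : Submodule ℂ Hc) : Set Hc) := by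
  apply IsSeqClosed.isClosed
  intro v v0 hv hlim
  choose u hu hLu using hv
  have him : 0 < |z.im| := abs_pos.mpr hz
  have hC : CauchySeq v := hlim.cauchySeq
  have hC1 : CauchySeq (fun j => (u j).fst) := by
    rw [Metric.cauchySeq_iff] at hC ⊢
    intro ε hε
    obtain ⟨N, hN⟩ := hC (|z.im| * ε) (by positivity)
    refine ⟨N, fun m hm n hn => ?_⟩
    have hsub : u m - u n ∈ (GJ a b).topologicalClosure :=
      Submodule.sub_mem _ (hu m) (hu n)
    have hb := K_bound z hsub
    have heq : (u m - u n).snd - z • (u m - u n).fst = v m - v n := by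
      have : Lz z (u m - u n) = v m - v n := by
        rw [map_sub, hLu, hLu]
      exact this
    rw [heq] at hb
    have hd := hN m hm n hn
    rw [dist_eq_norm] at hd ⊢
    have : (u m).fst - (u n).fst = (u m - u n).fst := (WithLp.sub_fst _ _).symm
    rw [this]
    calc ‖(u m - u n).fst‖ ≤ |z.im|⁻¹ * (|z.im| * ‖(u m - u n).fst‖) := by
          rw [← mul_assoc, inv_mul_cancel₀ him.ne', one_mul]
    _ ≤ |z.im|⁻¹ * ‖v m - v n‖ := by
          apply mul_le_mul_of_nonneg_left hb (by positivity)
    _ < |z.im|⁻¹ * (|z.im| * ε) := by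
          apply mul_lt_mul_of_pos_left hd (by positivity)
    _ = ε := by field_simp
  obtain ⟨w, hw⟩ := cauchySeq_tendsto_of_complete hC1
  have h2 : Filter.Tendsto (fun j => (u j).snd) Filter.atTop (nhds (v0 + z • w)) := by
    have heq : ∀ j, (u j).snd = v j + z • (u j).fst := by
      intro j
      have : (u j).snd - z • (u j).fst = v j := hLu j
      rw [← this]; abel
    have := hlim.add ((hw.const_smul z) : Filter.Tendsto (fun j => z • (u j).fst) _ _)
    apply this.congr
    intro j
    exact (heq j).symm
  set U : Ec := (WithLp.equiv 2 (Hc × Hc)).symm (w, v0 + z • w) with hU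
  have hU1 : U.fst = w := rfl
  have hU2 : U.snd = v0 + z • w := rfl
  have hUt : Filter.Tendsto u Filter.atTop (nhds U) := by
    rw [tendsto_iff_norm_sub_tendsto_zero]
    have hg : Filter.Tendsto (fun j => ‖(u j).fst - w‖ + ‖(u j).snd - (v0 + z • w)‖)
        Filter.atTop (nhds 0) := by
      have g1 := tendsto_iff_norm_sub_tendsto_zero.mp hw
      have g2 := tendsto_iff_norm_sub_tendsto_zero.mp h2
      simpa using g1.add g2
    apply squeeze_zero (fun j => norm_nonneg _) _ hg
    intro j
    calc ‖u j - U‖ ≤ ‖(u j - U).fst‖ + ‖(u j - U).snd‖ := norm_le_add _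
    _ = ‖(u j).fst - w‖ + ‖(u j).snd - (v0 + z • w)‖ := by
        rw [WithLp.sub_fst, WithLp.sub_snd, hU1, hU2]
  have hUK : U ∈ (GJ a b).topologicalClosure := by
    have hcl : IsClosed ((GJ a b).topologicalClosure : Set Ec) :=
      Submodule.isClosed_topologicalClosure _
    exact hcl.mem_of_tendsto hUt (Filter.Eventually.of_forall hu)
  refine ⟨U, hUK, ?_⟩
  show U.snd - z • U.fst = v0
  rw [hU1, hU2]
  abel

lemma Rorth_eigen {a b : ℕ → ℝ} (z : ℂ) {φ : Hc}
    (hφ : φ ∈ (Submodule.map (Lz z) ((GJ a b).topologicalClosure))ᗮ) (n : ℕ) :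
    jacobiMul a b (fun m => φ m) n = (starRingEnd ℂ) z * φ n := by
  have hmem : (Lz z) (gel a b (eseq n) (eseq_fin n))
      ∈ Submodule.map (Lz z) ((GJ a b).topologicalClosure) :=
    ⟨gel a b (eseq n) (eseq_fin n),
      (GJ a b).le_topologicalClosure (gel_mem a b (eseq n) (eseq_fin n)), rfl⟩
  have h := (Submodule.mem_orthogonal _ _).mp hφ _ hmem
  have hLz : (Lz z) (gel a b (eseq n) (eseq_fin n))
      = mk' (jacobiMul a b (eseq n)) (memfin (jm_support (eseq_fin n)))
        - z • mk' (eseq n) (memfin (eseq_fin n)) := rfl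
  rw [hLz, inner_sub_left, inner_smul_left, inner_tsum', inner_tsum'] at h
  have t1 : ∑' m, (starRingEnd ℂ) ((mk' (jacobiMul a b (eseq n))
      (memfin (jm_support (eseq_fin n)))) m) * (φ m)
      = jacobiMul a b (fun m => φ m) n := by
    simp_rw [mk'_apply]
    rw [← green_tsum a b (eseq n) (fun m => φ m) (eseq_bound n)]
    exact eseq_tsum _ n
  have t2 : ∑' m, (starRingEnd ℂ) ((mk' (eseq n) (memfin (eseq_fin n))) m) * (φ m) = φ n := by
    simp_rw [mk'_apply]
    exact eseq_tsum _ n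
  rw [t1, t2] at h
  linear_combination h

lemma decomp (S : JacobiSetup) (z : ℂ) (hz : z.im ≠ 0) (k : ℕ → ℂ) (hk : Memℓp k 2)
    (hJk : Memℓp (jacobiMul S.a S.b k) 2) :
    ∃ (x : Ec) (α β : ℂ), x ∈ (GJ S.a S.b).topologicalClosure ∧
      (∀ n, k n = x.fst n + α * S.p n z + β * S.p n ((starRingEnd ℂ) z)) := by
  classical
  set K := (GJ S.a S.b).topologicalClosure with hK
  set R := Submodule.map (Lz z) K with hR
  have hRc : IsClosed (R : Set Hc) := R_closed z hz
  haveI : CompleteSpace R := hRc.completeSpace_coe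
  set v : Hc := mk' _ hJk - z • mk' k hk with hv
  obtain ⟨v₁, hv₁, v₂, hv₂, hsum⟩ := R.exists_add_mem_mem_orthogonal v
  obtain ⟨x, hxK, hLx⟩ := hv₁
  -- v₂ is an eigenvector at conj z
  have heig : ∀ n, (v₂ : ℕ → ℂ) n = v₂ 0 * S.p n ((starRingEnd ℂ) z) :=
    eigen_unique S ((starRingEnd ℂ) z) (fun m => v₂ m) (Rorth_eigen z hv₂)
  have hzz : (starRingEnd ℂ) z - z ≠ 0 := by
    intro hcon
    apply hz
    have := congrArg Complex.im hcon
    simp [Complex.conj_im] at this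
    linarith
  set β : ℂ := v₂ 0 / ((starRingEnd ℂ) z - z) with hβ
  set r : ℕ → ℂ := fun n => k n - x.fst n - β * S.p n ((starRingEnd ℂ) z) with hr
  have hreig : ∀ n, jacobiMul S.a S.b r n = z * r n := by
    intro n
    have hx2 : ∀ m, x.snd m = jacobiMul S.a S.b (fun i => x.fst i) m := K_pointwise hxK
    have hvn : v n = jacobiMul S.a S.b k n - z * k n := by
      rw [hv, lp.coeFn_sub, Pi.sub_apply, lp.coeFn_smul, Pi.smul_apply, mk'_apply, mk'_apply,
        smul_eq_mul]
    have hv1n : v₁ n = jacobiMul S.a S.b (fun i => x.fst i) n - z * x.fst n := by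
      rw [← hLx]
      show (x.snd - z • x.fst) n = _
      rw [lp.coeFn_sub, Pi.sub_apply, lp.coeFn_smul, Pi.smul_apply, smul_eq_mul, hx2 n]
    have hptw : v n = v₁ n + v₂ n := by
      rw [hsum, lp.coeFn_add, Pi.add_apply]
    have hJr : jacobiMul S.a S.b r n
        = jacobiMul S.a S.b k n - jacobiMul S.a S.b (fun i => x.fst i) n
          - β * ((starRingEnd ℂ) z * S.p n ((starRingEnd ℂ) z)) := by
      rw [hr]
      have e1 : ∀ m, (fun i => k i - x.fst i - β * S.p i ((starRingEnd ℂ) z)) m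
          = (fun i => (k i - x.fst i) - (fun j => β * S.p j ((starRingEnd ℂ) z)) i) m :=
        fun m => rfl
      rw [jm_congr e1, jm_sub, jm_sub, jm_smul, peigen]
    have hβeq : β * ((starRingEnd ℂ) z - z) = v₂ 0 := by
      rw [hβ, div_mul_cancel₀ _ hzz]
    have hv₂n := heig n
    rw [hJr]
    rw [hvn, hv1n, hv₂n] at hptw
    simp only [hr]
    linear_combination hptw - S.p n ((starRingEnd ℂ) z) * hβeq
  have hrp : ∀ n, r n = r 0 * S.p n z := eigen_unique S z r hreig
  refine ⟨x, r 0, β, hxK, fun n => ?_⟩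
  have := hrp n
  rw [hr] at this
  simp only at this
  linear_combination this

/-! ### The master criterion for membership in `D(T)` -/

lemma phi_eq {a b : ℕ → ℝ} {x : Ec} (hx : x ∈ (GJ a b).topologicalClosure)
    (f : ℕ → ℂ) (hf : Memℓp f 2) (hJf : Memℓp (jacobiMul a b f) 2) :
    (inner ℂ x.fst (mk' _ hJf) : ℂ) = (inner ℂ x.snd (mk' f hf) : ℂ) := by
  have hw' := wprime_mem f hf hJf
  have hxo : x ∈ ((GJ a b)ᗮ)ᗮ := by
    rw [Submodule.orthogonal_orthogonal_eq_closure]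
    exact hx
  have h := (Submodule.mem_orthogonal _ _).mp hxo _ hw'
  rw [WithLp.prod_inner_apply, WithLp.ofLp_fst, WithLp.ofLp_snd, WithLp.ofLp_fst, WithLp.ofLp_snd] at h
  have e1 : (((WithLp.equiv 2 (Hc × Hc)).symm ((mk' _ hJf : Hc), - mk' f hf)).fst : Hc)
      = mk' _ hJf := rfl
  have e2 : (((WithLp.equiv 2 (Hc × Hc)).symm ((mk' _ hJf : Hc), - mk' f hf)).snd : Hc)
      = - mk' f hf := rfl
  rw [e1, e2, inner_neg_left] at h
  have h' := congrArg (starRingEnd ℂ) h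
  rw [map_add, map_neg, inner_conj_symm, inner_conj_symm, map_zero] at h'
  linear_combination h'

lemma mem_domT (S : JacobiSetup) (z : ℂ) (hz : z.im ≠ 0) (f : ℕ → ℂ)
    (hf : Memℓp f 2) (hJf : Memℓp (jacobiMul S.a S.b f) 2)
    (h1 : (inner ℂ (Pz S z) (mk' _ hJf) : ℂ)
        = (starRingEnd ℂ) z * (inner ℂ (Pz S z) (mk' f hf) : ℂ))
    (h2 : (inner ℂ (Pz S ((starRingEnd ℂ) z)) (mk' _ hJf) : ℂ)
        = z * (inner ℂ (Pz S ((starRingEnd ℂ) z)) (mk' f hf) : ℂ)) :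
    ((WithLp.equiv 2 (Hc × Hc)).symm (mk' f hf, mk' _ hJf))
      ∈ (GJ S.a S.b).topologicalClosure := by
  rw [← Submodule.orthogonal_orthogonal_eq_closure, Submodule.mem_orthogonal]
  intro u hu
  set a := S.a
  set b := S.b
  -- u = (-J u.snd, u.snd)
  have hk1 : ∀ n, u.fst n = - jacobiMul a b (fun m => u.snd m) n := orth_fst_eq hu
  have hJk : Memℓp (jacobiMul a b (fun m => u.snd m)) 2 := by
    have heq : (jacobiMul a b (fun m => u.snd m)) = fun n => - (u.fst n) := by
      funext n; rw [hk1 n]; ring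
    rw [heq]
    exact (lp.memℓp u.fst).neg
  -- decompose u.snd
  obtain ⟨x, α, β, hxK, hdec⟩ := decomp S z hz (fun m => u.snd m) (lp.memℓp u.snd) hJk
  have hx2 : ∀ m, x.snd m = jacobiMul a b (fun i => x.fst i) m := K_pointwise hxK
  have hJx : Memℓp (jacobiMul a b (fun i => x.fst i)) 2 := by
    have heq : (jacobiMul a b (fun i => x.fst i)) = fun m => x.snd m := by
      funext m; rw [hx2 m]
    rw [heq]
    exact lp.memℓp x.snd
  -- identify u.snd and J u.snd as lp combinations
  have hkrep : u.snd = x.fst + α • Pz S z + β • Pz S ((starRingEnd ℂ) z) := by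
    apply hc_ext
    intro n
    rw [lp.coeFn_add, Pi.add_apply, lp.coeFn_add, Pi.add_apply, lp.coeFn_smul, Pi.smul_apply,
      lp.coeFn_smul, Pi.smul_apply, smul_eq_mul, smul_eq_mul, Pz_apply, Pz_apply]
    exact hdec n
  have hJkval : ∀ n, jacobiMul a b (fun m => u.snd m) n
      = x.snd n + (α * z) * S.p n z + (β * (starRingEnd ℂ) z) * S.p n ((starRingEnd ℂ) z) := by
    intro n
    have e0 : ∀ m, (fun m => u.snd m) m
        = (fun m => (fun i => x.fst i + α * S.p i z) m
            + (fun i => β * S.p i ((starRingEnd ℂ) z)) m) m := by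
      intro m; simp only []; rw [hdec m]
    rw [jm_congr e0, jm_add, jm_add, jm_smul, jm_smul, peigen, peigen, hx2 n]
    ring
  have hu1 : u.fst = - mk' (jacobiMul a b (fun m => u.snd m)) hJk := by
    apply hc_ext
    intro n
    rw [lp.coeFn_neg, Pi.neg_apply, mk'_apply]
    exact hk1 n
  have hJkrep : mk' (jacobiMul a b (fun m => u.snd m)) hJk
      = x.snd + (α * z) • Pz S z + (β * (starRingEnd ℂ) z) • Pz S ((starRingEnd ℂ) z) := by
    apply hc_ext
    intro n
    rw [mk'_apply, lp.coeFn_add, Pi.add_apply, lp.coeFn_add, Pi.add_apply, lp.coeFn_smul,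
      Pi.smul_apply, lp.coeFn_smul, Pi.smul_apply, smul_eq_mul, smul_eq_mul, Pz_apply, Pz_apply]
    exact hJkval n
  -- expand the inner ℂ product
  rw [WithLp.prod_inner_apply, WithLp.ofLp_fst, WithLp.ofLp_snd, WithLp.ofLp_fst, WithLp.ofLp_snd]
  have w1 : (((WithLp.equiv 2 (Hc × Hc)).symm ((mk' f hf : Hc), (mk' _ hJf : Hc))).fst : Hc)
      = mk' f hf := rfl
  have w2 : (((WithLp.equiv 2 (Hc × Hc)).symm ((mk' f hf : Hc), (mk' _ hJf : Hc))).snd : Hc)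
      = mk' _ hJf := rfl
  rw [w1, w2, hu1, inner_neg_left, hJkrep, hkrep]
  rw [inner_add_left, inner_add_left, inner_smul_left, inner_smul_left,
    inner_add_left, inner_add_left, inner_smul_left, inner_smul_left]
  have hphi := phi_eq hxK f hf hJf
  rw [map_mul, map_mul, Complex.conj_conj]
  linear_combination hphi + (starRingEnd ℂ) α * h1 + (starRingEnd ℂ) β * h2

/-! ### From closure membership to `inDomT` -/

lemma K_to_inDomT {a b : ℕ → ℝ} (f g : ℕ → ℂ) (hf : Memℓp f 2) (hg : Memℓp g 2)
    (hK : ((WithLp.equiv 2 (Hc × Hc)).symm (mk' f hf, mk' g hg))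
      ∈ (GJ a b).topologicalClosure) :
    inDomT a b f := by
  refine ⟨g, ?_⟩
  have hset : ((WithLp.equiv 2 (Hc × Hc)).symm (mk' f hf, mk' g hg))
      ∈ closure (GJ a b : Set Ec) := by
    rw [← Submodule.topologicalClosure_coe]; exact hK
  obtain ⟨x, hx, hlim⟩ := mem_closure_iff_seq_limit.mp hset
  choose c hcfin e1 e2 using hx
  have W1 : (((WithLp.equiv 2 (Hc × Hc)).symm ((mk' f hf : Hc), (mk' g hg : Hc))).fst : Hc)
      = mk' f hf := rfl
  have W2 : (((WithLp.equiv 2 (Hc × Hc)).symm ((mk' f hf : Hc), (mk' g hg : Hc))).snd : Hc)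
      = mk' g hg := rfl
  have hfst := comp_tendsto_fst hlim
  have hsnd := comp_tendsto_snd hlim
  rw [W1] at hfst
  rw [W2] at hsnd
  have key1 : ∀ j, (fun n => ‖c j n - f n‖^2) = fun n => ‖((x j).fst - mk' f hf) n‖^2 := by
    intro j; funext n
    rw [lp.coeFn_sub, Pi.sub_apply, e1, mk'_apply]
  have key2 : ∀ j, (fun n => ‖jacobiMul a b (c j) n - g n‖^2)
      = fun n => ‖((x j).snd - mk' g hg) n‖^2 := by
    intro j; funext n
    rw [lp.coeFn_sub, Pi.sub_apply, e2, mk'_apply]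
  refine ⟨c, hcfin, fun j => ?_, ?_, fun j => ?_, ?_⟩
  · rw [key1 j]; exact summable_sq _
  · have hnorm := tendsto_iff_norm_sub_tendsto_zero.mp hfst
    have hsq : Filter.Tendsto (fun j => ‖(x j).fst - mk' f hf‖^2) Filter.atTop (nhds 0) := by
      simpa using hnorm.pow 2
    apply hsq.congr
    intro j
    rw [norm_sq_eq, key1 j]
  · rw [key2 j]; exact summable_sq _
  · have hnorm := tendsto_iff_norm_sub_tendsto_zero.mp hsnd
    have hsq : Filter.Tendsto (fun j => ‖(x j).snd - mk' g hg‖^2) Filter.atTop (nhds 0) := by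
      simpa using hnorm.pow 2
    apply hsq.congr
    intro j
    rw [norm_sq_eq, key2 j]

/-! ### Inner product identities -/

lemma inner_E0 (u : Hc) :
    (inner ℂ u (mk' (eseq 0) (memfin (eseq_fin 0))) : ℂ) = (starRingEnd ℂ) (u 0) := by
  rw [inner_tsum']
  rw [tsum_eq_single 0]
  · simp [eseq]
  · intro m hm
    have : eseq 0 m = 0 := by simp [eseq, if_neg hm]
    rw [mk'_apply, this, mul_zero]

lemma NPz_eq (S : JacobiSetup) (z : ℂ) :
    (inner ℂ (Pz S z) (Pz S z) : ℂ) = ((l2norm fun m => S.p m z : ℝ) : ℂ)^2 := by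
  rw [inner_self_eq_norm_sq_to_K]
  have hts : (∑' n, ‖(Pz S z) n‖^2) = ∑' n, ‖S.p n z‖^2 :=
    tsum_congr (fun n => by rw [Pz_apply])
  have hl2 : l2norm (fun m => S.p m z) = ‖Pz S z‖ := by
    rw [l2norm, ← hts, ← norm_sq_eq]
    exact Real.sqrt_sq (norm_nonneg _)
  rw [hl2]
  norm_cast

lemma Pz_ne (S : JacobiSetup) (z : ℂ) : (inner ℂ (Pz S z) (Pz S z) : ℂ) ≠ 0 := by
  rw [ne_eq, inner_self_eq_zero]
  intro h
  have h0 : Pz S z 0 = 0 := by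
    rw [h, lp.coeFn_zero]
    rfl
  rw [Pz_apply, S.hp0] at h0
  exact one_ne_zero h0

end Stmt7Aux

open Stmt7Aux in
/-- For `z₀` in the open upper half-plane and `λ ∈ ℂ`, subtracting the indicated multiples
of `𝔭_{z₀}` and `𝔭_{conj z₀}` from `𝔭_λ` (resp. `𝔮_λ`) produces elements of `D(T)`. -/
theorem stmt7 (S : JacobiSetup) (z₀ : ℂ) (hz₀ : 0 < z₀.im) (lam : ℂ)
    (den : ℂ)
    (hden : den = 2 * Complex.I * (z₀.im : ℂ) * ((l2norm fun m => S.p m z₀ : ℝ) : ℂ) ^ 2) :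
    (inDomT S.a S.b fun n =>
      S.p n lam - (nevD S lam (starRingEnd ℂ z₀) / den) * S.p n z₀
        - (-nevD S lam z₀ / den) * S.p n (starRingEnd ℂ z₀)) ∧
    (inDomT S.a S.b fun n =>
      S.q n lam - (nevC S lam (starRingEnd ℂ z₀) / den) * S.p n z₀
        - (-nevC S lam z₀ / den) * S.p n (starRingEnd ℂ z₀)) := by
  have him : z₀.im ≠ 0 := hz₀.ne'
  set Nin : ℂ := (inner ℂ (Pz S z₀) (Pz S z₀) : ℂ) with hNin
  have hden2 : (z₀ - (starRingEnd ℂ) z₀) * Nin = den := by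
    rw [hden, hNin, NPz_eq, Complex.sub_conj]
    push_cast
    ring
  have hNne : Nin ≠ 0 := Pz_ne S z₀
  have hzne : z₀ - (starRingEnd ℂ) z₀ ≠ 0 := by
    rw [Complex.sub_conj]
    apply mul_ne_zero _ Complex.I_ne_zero
    rw [ne_eq, Complex.ofReal_eq_zero]
    intro h; apply him; linarith
  have hdnz : den ≠ 0 := by
    rw [← hden2]
    exact mul_ne_zero hzne hNne
  -- tsum identities
  have hD1 : (lam - (starRingEnd ℂ) z₀) * (inner ℂ (Pz S z₀) (Pz S lam) : ℂ)
      = nevD S lam ((starRingEnd ℂ) z₀) := by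
    have hip : (inner ℂ (Pz S z₀) (Pz S lam) : ℂ)
        = ∑' n, S.p n lam * S.p n ((starRingEnd ℂ) z₀) := by
      rw [inner_tsum']
      apply tsum_congr
      intro n
      rw [Pz_apply, Pz_apply, pconj S z₀ n]
      ring
    rw [nevD, hip]
  have hD2 : (lam - z₀) * (inner ℂ (Pz S ((starRingEnd ℂ) z₀)) (Pz S lam) : ℂ)
      = nevD S lam z₀ := by
    have hip : (inner ℂ (Pz S ((starRingEnd ℂ) z₀)) (Pz S lam) : ℂ)
        = ∑' n, S.p n lam * S.p n z₀ := by
      rw [inner_tsum']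
      apply tsum_congr
      intro n
      rw [Pz_apply, Pz_apply, pconj S z₀ n, Complex.conj_conj]
      ring
    rw [nevD, hip]
  have hN2 : (inner ℂ (Pz S ((starRingEnd ℂ) z₀)) (Pz S ((starRingEnd ℂ) z₀)) : ℂ) = Nin := by
    rw [hNin, inner_tsum', inner_tsum']
    apply tsum_congr
    intro n
    simp only [Pz_apply]
    rw [pconj S z₀ n, Complex.conj_conj]
    ring
  have hC1 : (lam - (starRingEnd ℂ) z₀) * (inner ℂ (Pz S z₀) (Qz S lam) : ℂ) + 1
      = nevC S lam ((starRingEnd ℂ) z₀) := by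
    have hip : (inner ℂ (Pz S z₀) (Qz S lam) : ℂ)
        = ∑' n, S.q n lam * S.p n ((starRingEnd ℂ) z₀) := by
      rw [inner_tsum']
      apply tsum_congr
      intro n
      rw [Pz_apply, Qz_apply, pconj S z₀ n]
      ring
    rw [nevC, hip]
    ring
  have hC2 : (lam - z₀) * (inner ℂ (Pz S ((starRingEnd ℂ) z₀)) (Qz S lam) : ℂ) + 1
      = nevC S lam z₀ := by
    have hip : (inner ℂ (Pz S ((starRingEnd ℂ) z₀)) (Qz S lam) : ℂ)
        = ∑' n, S.q n lam * S.p n z₀ := by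
      rw [inner_tsum']
      apply tsum_congr
      intro n
      rw [Pz_apply, Qz_apply, pconj S z₀ n, Complex.conj_conj]
      ring
    rw [nevC, hip]
    ring
  constructor
  -- ### the p-part
  · set s1 : ℂ := nevD S lam (starRingEnd ℂ z₀) / den with hs1def
    set s2 : ℂ := -nevD S lam z₀ / den with hs2def
    have hs1 : s1 * den = nevD S lam ((starRingEnd ℂ) z₀) := by
      rw [hs1def]; exact div_mul_cancel₀ _ hdnz
    have hs2 : s2 * den = - nevD S lam z₀ := by
      rw [hs2def]; exact div_mul_cancel₀ _ hdnz
    set fp : ℕ → ℂ := fun n => S.p n lam - s1 * S.p n z₀ - s2 * S.p n ((starRingEnd ℂ) z₀)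
      with hfpdef
    set F : Hc := Pz S lam - s1 • Pz S z₀ - s2 • Pz S ((starRingEnd ℂ) z₀) with hFdef
    have hFrep : ∀ n, fp n = F n := by
      intro n
      rw [hFdef, lp.coeFn_sub, Pi.sub_apply, lp.coeFn_sub, Pi.sub_apply, lp.coeFn_smul,
        Pi.smul_apply, lp.coeFn_smul, Pi.smul_apply, smul_eq_mul, smul_eq_mul,
        Pz_apply, Pz_apply, Pz_apply]
    have hfp2 : Memℓp fp 2 := by
      have hcoe : fp = ⇑F := funext hFrep
      rw [hcoe]
      exact lp.memℓp F
    set G : Hc := lam • Pz S lam - (s1 * z₀) • Pz S z₀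
      - (s2 * (starRingEnd ℂ) z₀) • Pz S ((starRingEnd ℂ) z₀) with hGdef
    have hJval : ∀ n, jacobiMul S.a S.b fp n = G n := by
      intro n
      have e0 : ∀ m, fp m = (fun i => (fun j => S.p j lam - (fun l => s1 * S.p l z₀) j) i
          - (fun j => s2 * S.p j ((starRingEnd ℂ) z₀)) i) m := fun m => rfl
      rw [jm_congr e0, jm_sub, jm_sub, jm_smul, jm_smul, peigen, peigen, peigen]
      rw [hGdef, lp.coeFn_sub, Pi.sub_apply, lp.coeFn_sub, Pi.sub_apply, lp.coeFn_smul,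
        Pi.smul_apply, lp.coeFn_smul, Pi.smul_apply, lp.coeFn_smul, Pi.smul_apply,
        smul_eq_mul, smul_eq_mul, smul_eq_mul, Pz_apply, Pz_apply, Pz_apply]
      ring
    have hJfp : Memℓp (jacobiMul S.a S.b fp) 2 := by
      have hcoe : jacobiMul S.a S.b fp = ⇑G := funext hJval
      rw [hcoe]
      exact lp.memℓp G
    have hmkF : mk' fp hfp2 = F := hc_ext (fun n => hFrep n)
    have hmkG : mk' (jacobiMul S.a S.b fp) hJfp = G := hc_ext (fun n => hJval n)
    have h1 : (inner ℂ (Pz S z₀) (mk' _ hJfp) : ℂ)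
        = (starRingEnd ℂ) z₀ * (inner ℂ (Pz S z₀) (mk' fp hfp2) : ℂ) := by
      rw [hmkF, hmkG, hFdef, hGdef]
      rw [inner_sub_right, inner_sub_right, inner_smul_right, inner_smul_right,
        inner_smul_right, inner_sub_right, inner_sub_right, inner_smul_right,
        inner_smul_right]
      linear_combination hD1 - s1 * hden2 - hs1
    have h2 : (inner ℂ (Pz S ((starRingEnd ℂ) z₀)) (mk' _ hJfp) : ℂ)
        = z₀ * (inner ℂ (Pz S ((starRingEnd ℂ) z₀)) (mk' fp hfp2) : ℂ) := by
      rw [hmkF, hmkG, hFdef, hGdef]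
      rw [inner_sub_right, inner_sub_right, inner_smul_right, inner_smul_right,
        inner_smul_right, inner_sub_right, inner_sub_right, inner_smul_right,
        inner_smul_right]
      linear_combination hD2 + s2 * hden2 + hs2
        - s2 * ((starRingEnd ℂ) z₀ - z₀) * hN2
    exact K_to_inDomT fp (jacobiMul S.a S.b fp) hfp2 hJfp
      (mem_domT S z₀ him fp hfp2 hJfp h1 h2)
  -- ### the q-part
  · set r1 : ℂ := nevC S lam (starRingEnd ℂ z₀) / den with hr1def
    set r2 : ℂ := -nevC S lam z₀ / den with hr2def
    have hr1 : r1 * den = nevC S lam ((starRingEnd ℂ) z₀) := by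
      rw [hr1def]; exact div_mul_cancel₀ _ hdnz
    have hr2 : r2 * den = - nevC S lam z₀ := by
      rw [hr2def]; exact div_mul_cancel₀ _ hdnz
    set fq : ℕ → ℂ := fun n => S.q n lam - r1 * S.p n z₀ - r2 * S.p n ((starRingEnd ℂ) z₀)
      with hfqdef
    set F : Hc := Qz S lam - r1 • Pz S z₀ - r2 • Pz S ((starRingEnd ℂ) z₀) with hFdef
    have hFrep : ∀ n, fq n = F n := by
      intro n
      rw [hFdef, lp.coeFn_sub, Pi.sub_apply, lp.coeFn_sub, Pi.sub_apply, lp.coeFn_smul,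
        Pi.smul_apply, lp.coeFn_smul, Pi.smul_apply, smul_eq_mul, smul_eq_mul,
        Pz_apply, Pz_apply, Qz_apply]
    have hfq2 : Memℓp fq 2 := by
      have hcoe : fq = ⇑F := funext hFrep
      rw [hcoe]
      exact lp.memℓp F
    set E0 : Hc := mk' (eseq 0) (memfin (eseq_fin 0)) with hE0def
    set G : Hc := (lam • Qz S lam + E0) - (r1 * z₀) • Pz S z₀
      - (r2 * (starRingEnd ℂ) z₀) • Pz S ((starRingEnd ℂ) z₀) with hGdef
    have hJval : ∀ n, jacobiMul S.a S.b fq n = G n := by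
      intro n
      have e0 : ∀ m, fq m = (fun i => (fun j => S.q j lam - (fun l => r1 * S.p l z₀) j) i
          - (fun j => r2 * S.p j ((starRingEnd ℂ) z₀)) i) m := fun m => rfl
      rw [jm_congr e0, jm_sub, jm_sub, jm_smul, jm_smul, qeigen, peigen, peigen]
      rw [hGdef, lp.coeFn_sub, Pi.sub_apply, lp.coeFn_sub, Pi.sub_apply, lp.coeFn_add,
        Pi.add_apply, lp.coeFn_smul, Pi.smul_apply, lp.coeFn_smul, Pi.smul_apply,
        lp.coeFn_smul, Pi.smul_apply, smul_eq_mul, smul_eq_mul, smul_eq_mul,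
        Pz_apply, Pz_apply, Qz_apply, hE0def, mk'_apply]
      have : eseq 0 n = if n = 0 then 1 else 0 := rfl
      rw [this]
      ring
    have hJfq : Memℓp (jacobiMul S.a S.b fq) 2 := by
      have hcoe : jacobiMul S.a S.b fq = ⇑G := funext hJval
      rw [hcoe]
      exact lp.memℓp G
    have hmkF : mk' fq hfq2 = F := hc_ext (fun n => hFrep n)
    have hmkG : mk' (jacobiMul S.a S.b fq) hJfq = G := hc_ext (fun n => hJval n)
    have hE1 : (inner ℂ (Pz S z₀) E0 : ℂ) = 1 := by
      rw [hE0def, inner_E0, Pz_apply, S.hp0, map_one]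
    have hE2 : (inner ℂ (Pz S ((starRingEnd ℂ) z₀)) E0 : ℂ) = 1 := by
      rw [hE0def, inner_E0, Pz_apply, S.hp0, map_one]
    have h1 : (inner ℂ (Pz S z₀) (mk' _ hJfq) : ℂ)
        = (starRingEnd ℂ) z₀ * (inner ℂ (Pz S z₀) (mk' fq hfq2) : ℂ) := by
      rw [hmkF, hmkG, hFdef, hGdef]
      rw [inner_sub_right, inner_sub_right, inner_add_right, inner_smul_right,
        inner_smul_right, inner_smul_right, inner_sub_right, inner_sub_right,
        inner_smul_right, inner_smul_right, hE1]
      linear_combination hC1 - r1 * hden2 - hr1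
    have h2 : (inner ℂ (Pz S ((starRingEnd ℂ) z₀)) (mk' _ hJfq) : ℂ)
        = z₀ * (inner ℂ (Pz S ((starRingEnd ℂ) z₀)) (mk' fq hfq2) : ℂ) := by
      rw [hmkF, hmkG, hFdef, hGdef]
      rw [inner_sub_right, inner_sub_right, inner_add_right, inner_smul_right,
        inner_smul_right, inner_smul_right, inner_sub_right, inner_sub_right,
        inner_smul_right, inner_smul_right, hE2]
      linear_combination hC2 + r2 * hden2 + hr2
        - r2 * ((starRingEnd ℂ) z₀ - z₀) * hN2
    exact K_to_inDomT fq (jacobiMul S.a S.b fq) hfq2 hJfq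
      (mem_domT S z₀ him fq hfq2 hJfq h1 h2)
end
end

section
/- Let λ ∈ ℂ. For every t ∈ ℝ: 𝔭_λ ∈ D(T) + ℂ·(𝔮₀ + t·𝔭₀) if and only if B(λ) + t·D(λ) = 0, and 𝔮_λ ∈ D(T) + ℂ·(𝔮₀ + t·𝔭₀) if and only if A(λ) + t·C(λ) = 0. Moreover 𝔭_λ ∈ D(T) + ℂ·𝔭₀ if and only if D(λ) = 0, and 𝔮_λ ∈ D(T) + ℂ·𝔭₀ if and only if C(λ) = 0. -/
open Filter Topology MeasureTheory

noncomputable section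

/-! ### Auxiliary development -/

namespace JW

/-- square-summability -/
def L2 (f : ℕ → ℂ) : Prop := Summable fun n => ‖f n‖ ^ 2

lemma l2_iff (f : ℕ → ℂ) : Memℓp f 2 ↔ L2 f := by
  rw [memℓp_gen_iff (by norm_num : (0:ℝ) < (2:ENNReal).toReal)]
  unfold L2
  norm_num

lemma L2.sub {f g : ℕ → ℂ} (hf : L2 f) (hg : L2 g) : L2 fun n => f n - g n := by
  rw [← l2_iff] at *
  exact hf.sub hg

lemma L2.add {f g : ℕ → ℂ} (hf : L2 f) (hg : L2 g) : L2 fun n => f n + g n := by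
  rw [← l2_iff] at *
  exact hf.add hg

lemma L2.const_mul {f : ℕ → ℂ} (hf : L2 f) (c : ℂ) : L2 fun n => c * f n := by
  rw [← l2_iff] at *
  exact hf.const_smul c

lemma L2.of_finite {f : ℕ → ℂ} (hf : (Function.support f).Finite) : L2 f := by
  apply summable_of_finite_support
  apply hf.subset
  intro n hn
  simp only [Function.mem_support] at *
  intro h
  simp [h] at hn

lemma L2.star {f : ℕ → ℂ} (hf : L2 f) : L2 fun n => star (f n) := by
  unfold L2 at *
  simpa using hf

lemma L2.summable_mul {x y : ℕ → ℂ} (hx : L2 x) (hy : L2 y) :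
    Summable fun n => x n * y n := by
  apply Summable.of_norm
  apply Summable.of_nonneg_of_le (fun n => norm_nonneg _)
    (fun n => ?_) ((Summable.add (hx : Summable _) (hy : Summable _)).div_const 2)
  rw [norm_mul]
  nlinarith [norm_nonneg (x n), norm_nonneg (y n), sq_nonneg (‖x n‖ - ‖y n‖)]

variable (a b : ℕ → ℝ)

lemma jm_add (f g : ℕ → ℂ) (n : ℕ) :
    jacobiMul a b (fun m => f m + g m) n = jacobiMul a b f n + jacobiMul a b g n := by
  cases n <;> simp [jacobiMul] <;> ring

lemma jm_smul (c : ℂ) (f : ℕ → ℂ) (n : ℕ) :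
    jacobiMul a b (fun m => c * f m) n = c * jacobiMul a b f n := by
  cases n <;> simp [jacobiMul] <;> ring

lemma jm_star (f : ℕ → ℂ) (n : ℕ) :
    jacobiMul a b (fun m => star (f m)) n = star (jacobiMul a b f n) := by
  cases n <;> simp [jacobiMul]

/-- Wronskian -/
def Wr (f h : ℕ → ℂ) (n : ℕ) : ℂ := (a n : ℂ) * (f (n + 1) * h n - f n * h (n + 1))

/-- Green summand -/
def W2 (f h : ℕ → ℂ) (n : ℕ) : ℂ := jacobiMul a b f n * h n - f n * jacobiMul a b h n

/-- boundary form -/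
def Wlim (f h : ℕ → ℂ) : ℂ := ∑' n, W2 a b f h n

lemma green_sum (f h : ℕ → ℂ) (N : ℕ) :
    ∑ n ∈ Finset.range (N + 1), W2 a b f h n = Wr a f h N := by
  induction N with
  | zero => simp [W2, jacobiMul, Wr]; ring
  | succ N ih =>
      rw [Finset.sum_range_succ, ih]
      simp [W2, jacobiMul, Wr]
      ring

lemma pluecker (f h p q : ℕ → ℂ) (n : ℕ) :
    Wr a f h n * Wr a p q n = Wr a f p n * Wr a h q n - Wr a f q n * Wr a h p n := by
  simp only [Wr]; ring

lemma W2_summable {f h : ℕ → ℂ} (hf : L2 f) (hjf : L2 (jacobiMul a b f))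
    (hh : L2 h) (hjh : L2 (jacobiMul a b h)) : Summable (W2 a b f h) :=
  (hjf.summable_mul hh).sub (hf.summable_mul hjh)

lemma tendsto_Wr {f h : ℕ → ℂ} (hs : Summable (W2 a b f h)) :
    Tendsto (Wr a f h) atTop (𝓝 (Wlim a b f h)) := by
  have h1 := hs.hasSum.tendsto_sum_nat
  have h2 : Tendsto (fun N : ℕ => N + 1) atTop atTop := tendsto_add_atTop_nat 1
  have h3 := h1.comp h2
  simpa [Function.comp_def, green_sum a b f h, Wlim] using h3

end JW

namespace JW

variable (S : JacobiSetup)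

/-- orthonormal polynomial sequence at z -/
def P (z : ℂ) : ℕ → ℂ := fun n => S.p n z
/-- second kind sequence at z -/
def Q (z : ℂ) : ℕ → ℂ := fun n => S.q n z
/-- first basis vector -/
def e0 : ℕ → ℂ := fun n => if n = 0 then 1 else 0

lemma JP (z : ℂ) (n : ℕ) : jacobiMul S.a S.b (P S z) n = z * P S z n := by
  cases n with
  | zero =>
      have ha0 : ((S.a 0 : ℂ)) ≠ 0 := by
        exact_mod_cast (S.ha 0).ne'
      simp only [jacobiMul, P, S.hp0, S.hp1]
      field_simp
      ring
  | succ n =>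
      simp only [jacobiMul, P]
      linear_combination - S.hrecp n z

lemma JQ (z : ℂ) (n : ℕ) : jacobiMul S.a S.b (Q S z) n = z * Q S z n + e0 n := by
  cases n with
  | zero =>
      have ha0 : ((S.a 0 : ℂ)) ≠ 0 := by
        exact_mod_cast (S.ha 0).ne'
      simp only [jacobiMul, Q, S.hq0, S.hq1, e0]
      field_simp
      simp
  | succ n =>
      simp only [jacobiMul, Q, e0, Nat.succ_ne_zero, if_false]
      linear_combination - S.hrecq n z

lemma l2P (z : ℂ) : L2 (P S z) := by
  apply Summable.of_nonneg_of_le (fun n => sq_nonneg _) (fun n => ?_) (S.indet z)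
  have := sq_nonneg ‖S.q n z‖
  simp only [P]
  nlinarith

lemma l2Q (z : ℂ) : L2 (Q S z) := by
  apply Summable.of_nonneg_of_le (fun n => sq_nonneg _) (fun n => ?_) (S.indet z)
  have := sq_nonneg ‖S.p n z‖
  simp only [Q]
  nlinarith

lemma l2e0 : L2 (e0) := by
  apply L2.of_finite
  apply Set.Finite.subset (Set.finite_singleton 0)
  intro n hn
  simp only [Function.mem_support, e0] at hn
  simp only [Set.mem_singleton_iff]
  by_contra h
  simp [h] at hn

lemma l2JP (z : ℂ) : L2 (jacobiMul S.a S.b (P S z)) := by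
  have : jacobiMul S.a S.b (P S z) = fun n => z * P S z n := funext fun n => JP S z n
  rw [this]
  exact (l2P S z).const_mul z

lemma l2JQ (z : ℂ) : L2 (jacobiMul S.a S.b (Q S z)) := by
  have : jacobiMul S.a S.b (Q S z) = fun n => z * Q S z n + e0 n := funext fun n => JQ S z n
  rw [this]
  exact ((l2Q S z).const_mul z).add l2e0

lemma tsum_mul_e0 (f : ℕ → ℂ) : ∑' n, f n * e0 n = f 0 := by
  rw [tsum_eq_single 0 (fun n hn => by simp [e0, hn])]
  simp [e0]

/-! Wlim computations -/

lemma WlimPP (u v : ℂ) : Wlim S.a S.b (P S u) (P S v) = nevD S u v := by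
  unfold Wlim nevD
  have h1 : ∀ n, W2 S.a S.b (P S u) (P S v) n = (u - v) * (S.p n u * S.p n v) := by
    intro n
    simp only [W2, JP, P]
    ring
  rw [tsum_congr h1, tsum_mul_left]

lemma WlimPQ (u v : ℂ) : Wlim S.a S.b (P S u) (Q S v) = nevB S u v := by
  unfold Wlim nevB
  have h1 : ∀ n, W2 S.a S.b (P S u) (Q S v) n
      = (u - v) * (P S u n * Q S v n) - P S u n * e0 n := by
    intro n
    simp only [W2, JP, JQ, P, Q]
    ring
  have hs : Summable fun n => (u - v) * (P S u n * Q S v n) :=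
    ((l2P S u).summable_mul (l2Q S v)).mul_left _
  have hs2 : Summable fun n => (P S u) n * e0 n := (l2P S u).summable_mul (l2e0)
  rw [tsum_congr h1, hs.tsum_sub hs2, tsum_mul_left, tsum_mul_e0]
  have : P S u 0 = 1 := S.hp0 u
  rw [this]
  ring_nf
  rfl

lemma WlimQP (u v : ℂ) : Wlim S.a S.b (Q S u) (P S v) = nevC S u v := by
  unfold Wlim nevC
  have h1 : ∀ n, W2 S.a S.b (Q S u) (P S v) n
      = (u - v) * (Q S u n * P S v n) + P S v n * e0 n := by
    intro n
    simp only [W2, JP, JQ, P, Q]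
    ring
  have hs : Summable fun n => (u - v) * (Q S u n * P S v n) :=
    ((l2Q S u).summable_mul (l2P S v)).mul_left _
  have hs2 : Summable fun n => (P S v) n * e0 n := (l2P S v).summable_mul (l2e0)
  rw [tsum_congr h1, hs.tsum_add hs2, tsum_mul_left, tsum_mul_e0]
  have : P S v 0 = 1 := S.hp0 v
  rw [this]
  ring_nf
  rfl

lemma WlimQQ (u v : ℂ) : Wlim S.a S.b (Q S u) (Q S v) = nevA S u v := by
  unfold Wlim nevA
  have h1 : ∀ n, W2 S.a S.b (Q S u) (Q S v) n = (u - v) * (S.q n u * S.q n v) := by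
    intro n
    cases n with
    | zero => simp only [W2, JP, JQ, Q, e0]; simp [S.hq0]
    | succ m =>
        simp only [W2, JP, JQ, Q, e0]
        simp only [Nat.succ_ne_zero, if_false]
        ring
  rw [tsum_congr h1, tsum_mul_left]

lemma Wr_P0_Q0 (n : ℕ) : Wr S.a (P S 0) (Q S 0) n = -1 := by
  induction n with
  | zero =>
      have h := green_sum S.a S.b (P S 0) (Q S 0) 0
      simp only [zero_add, Finset.range_one, Finset.sum_singleton] at h
      rw [← h]
      simp [W2, JP, JQ, e0, P, S.hp0]
  | succ n ih =>
      have h1 := green_sum S.a S.b (P S 0) (Q S 0) (n+1)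
      have h2 := green_sum S.a S.b (P S 0) (Q S 0) n
      rw [Finset.sum_range_succ, h2, ih] at h1
      rw [← h1]
      simp [W2, JP, JQ, e0]

end JW

namespace JW

variable (a b : ℕ → ℝ)

lemma support_zero_of_bdd {u : ℕ → ℂ} {N : ℕ} (hN : ∀ m ∈ Function.support u, m ≤ N)
    {m : ℕ} (hm : N < m) : u m = 0 := by
  by_contra h
  exact absurd (hN m h) (not_le.2 hm)

lemma support_jm_finite {u : ℕ → ℂ} (hu : (Function.support u).Finite) :
    (Function.support (jacobiMul a b u)).Finite := by
  obtain ⟨N, hN⟩ := hu.bddAbove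
  have hz : ∀ m, N < m → u m = 0 := fun m hm => support_zero_of_bdd (fun x hx => hN hx) hm
  apply Set.Finite.subset (Set.finite_Iic (N + 1))
  intro n hn
  simp only [Function.mem_support] at hn
  simp only [Set.mem_Iic]
  by_contra hc
  push_neg at hc
  obtain ⟨k, rfl⟩ : ∃ k, n = k + 1 := ⟨n - 1, by omega⟩
  have h1 : u k = 0 := hz _ (by omega)
  have h2 : u (k+1) = 0 := hz _ (by omega)
  have h3 : u (k+2) = 0 := hz _ (by omega)
  simp [jacobiMul, h1, h2, h3] at hn

lemma finGreen {u : ℕ → ℂ} (hu : (Function.support u).Finite) (h : ℕ → ℂ) :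
    ∑' n, jacobiMul a b u n * h n = ∑' n, u n * jacobiMul a b h n := by
  obtain ⟨N, hN⟩ := hu.bddAbove
  have hz : ∀ m, N < m → u m = 0 := fun m hm => support_zero_of_bdd (fun x hx => hN hx) hm
  have hju := support_jm_finite a b hu
  have s1 : Summable fun n => jacobiMul a b u n * h n := by
    apply summable_of_finite_support
    apply hju.subset
    intro n hn
    simp only [Function.mem_support] at *
    intro hc; simp [hc] at hn
  have s2 : Summable fun n => u n * jacobiMul a b h n := by
    apply summable_of_finite_support
    apply hu.subset
    intro n hn
    simp only [Function.mem_support] at *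
    intro hc; simp [hc] at hn
  have key : ∑' n, W2 a b u h n = 0 := by
    have hsum : Summable (W2 a b u h) := by
      have : W2 a b u h = fun n => jacobiMul a b u n * h n - u n * jacobiMul a b h n := rfl
      rw [this]; exact s1.sub s2
    have t1 : Tendsto (fun M => ∑ n ∈ Finset.range (M + 1), W2 a b u h n) atTop
        (𝓝 (∑' n, W2 a b u h n)) :=
      (hsum.hasSum.tendsto_sum_nat).comp (tendsto_add_atTop_nat 1)
    have t2 : Tendsto (fun M => ∑ n ∈ Finset.range (M + 1), W2 a b u h n) atTop (𝓝 0) := by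
      apply Tendsto.congr' _ tendsto_const_nhds
      filter_upwards [eventually_ge_atTop (N + 1)] with M hM
      rw [green_sum]
      have h1 : u M = 0 := hz _ (by omega)
      have h2 : u (M+1) = 0 := hz _ (by omega)
      simp [Wr, h1, h2]
    exact tendsto_nhds_unique t1 t2
  have hsplit : ∑' n, W2 a b u h n
      = (∑' n, jacobiMul a b u n * h n) - ∑' n, u n * jacobiMul a b h n := by
    exact s1.tsum_sub s2
  rw [hsplit] at key
  exact sub_eq_zero.mp key

end JW

namespace JW

variable (a b : ℕ → ℝ)

lemma sq_tendsto_zero {x : ℕ → ℝ} (hx : ∀ k, 0 ≤ x k)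
    (h : Tendsto (fun k => x k ^ 2) atTop (𝓝 0)) : Tendsto x atTop (𝓝 0) := by
  have h1 : Tendsto (fun k => Real.sqrt (x k ^ 2)) atTop (𝓝 (Real.sqrt 0)) := h.sqrt
  simp only [Real.sqrt_zero] at h1
  apply h1.congr
  intro k
  exact Real.sqrt_sq (hx k)

lemma coord_tendsto {u : ℕ → ℕ → ℂ} {f : ℕ → ℂ}
    (hsum : ∀ k, Summable fun n => ‖u k n - f n‖ ^ 2)
    (hlim : Tendsto (fun k => ∑' n, ‖u k n - f n‖ ^ 2) atTop (𝓝 0)) (n : ℕ) :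
    Tendsto (fun k => u k n) atTop (𝓝 (f n)) := by
  have h1 : ∀ k, ‖u k n - f n‖ ^ 2 ≤ ∑' m, ‖u k m - f m‖ ^ 2 := fun k =>
    Summable.le_tsum (hsum k) n (fun m _ => sq_nonneg _)
  have h2 : Tendsto (fun k => ‖u k n - f n‖ ^ 2) atTop (𝓝 0) :=
    squeeze_zero (fun k => sq_nonneg _) h1 hlim
  have h3 : Tendsto (fun k => ‖u k n - f n‖) atTop (𝓝 0) :=
    sq_tendsto_zero (fun k => norm_nonneg _) h2
  rw [tendsto_iff_norm_sub_tendsto_zero]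
  exact h3

lemma graph_l2 {f g : ℕ → ℂ} (hg : jacobiGraph a b f g) : L2 f ∧ L2 g := by
  obtain ⟨u, hfin, hsum1, _, hsum2, _⟩ := hg
  constructor
  · have h1 : Memℓp (u 0) 2 := (l2_iff _).2 (L2.of_finite (hfin 0))
    have h2 : Memℓp (fun n => u 0 n - f n) 2 := (l2_iff _).2 (hsum1 0)
    have h3 := h1.sub h2
    rw [l2_iff] at h3
    have : (u 0 - fun n => u 0 n - f n) = f := by
      funext n; simp only [Pi.sub_apply]; ring
    rwa [this] at h3
  · have h1 : Memℓp (jacobiMul a b (u 0)) 2 :=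
      (l2_iff _).2 (L2.of_finite (support_jm_finite a b (hfin 0)))
    have h2 : Memℓp (fun n => jacobiMul a b (u 0) n - g n) 2 := (l2_iff _).2 (hsum2 0)
    have h3 := h1.sub h2
    rw [l2_iff] at h3
    have : (jacobiMul a b (u 0) - fun n => jacobiMul a b (u 0) n - g n) = g := by
      funext n; simp only [Pi.sub_apply]; ring
    rwa [this] at h3

lemma graph_jm {f g : ℕ → ℂ} (hg : jacobiGraph a b f g) :
    jacobiMul a b f = g := by
  obtain ⟨u, hfin, hsum1, hlim1, hsum2, hlim2⟩ := hg
  funext n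
  have hc : ∀ m, Tendsto (fun k => u k m) atTop (𝓝 (f m)) := coord_tendsto hsum1 hlim1
  have hg' : Tendsto (fun k => jacobiMul a b (u k) n) atTop (𝓝 (g n)) :=
    coord_tendsto hsum2 hlim2 n
  have hf' : Tendsto (fun k => jacobiMul a b (u k) n) atTop (𝓝 (jacobiMul a b f n)) := by
    cases n with
    | zero =>
        simp only [jacobiMul]
        exact (((hc 0).const_mul _).add ((hc 1).const_mul _))
    | succ m =>
        simp only [jacobiMul]
        exact ((((hc m).const_mul _).add ((hc (m+1)).const_mul _)).add
          ((hc (m+2)).const_mul _))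
  exact tendsto_nhds_unique hf' hg'

/-- the lp space -/
abbrev Hl2 : Type := lp (fun _ : ℕ => ℂ) 2

lemma lp_norm_sq (f : Hl2) : ‖f‖ ^ 2 = ∑' n, ‖f n‖ ^ 2 := by
  have h := lp.norm_rpow_eq_tsum (p := 2) (by norm_num) f
  norm_num at h
  simpa using h

/-- pack -/
def mkl2 (f : ℕ → ℂ) (hf : L2 f) : Hl2 := ⟨f, (l2_iff f).2 hf⟩

lemma tsum_mul_bound {x y : ℕ → ℂ} (hx : L2 x) (hy : L2 y) :
    ‖∑' n, x n * y n‖ ≤ Real.sqrt (∑' n, ‖x n‖ ^ 2) * Real.sqrt (∑' n, ‖y n‖ ^ 2) := by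
  classical
  set X : Hl2 := mkl2 (fun n => star (x n)) hx.star
  set Y : Hl2 := mkl2 y hy
  have hinner : (inner ℂ X Y : ℂ) = ∑' n, x n * y n := by
    rw [lp.inner_eq_tsum]
    apply tsum_congr
    intro n
    simp [X, Y, mkl2, RCLike.inner_apply]
    ring
  have hX : ‖X‖ = Real.sqrt (∑' n, ‖x n‖ ^ 2) := by
    rw [← Real.sqrt_sq (norm_nonneg X), lp_norm_sq]
    congr 1
    apply tsum_congr
    intro n
    simp [X, mkl2]
  have hY : ‖Y‖ = Real.sqrt (∑' n, ‖y n‖ ^ 2) := by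
    rw [← Real.sqrt_sq (norm_nonneg Y), lp_norm_sq]
    rfl
  calc ‖∑' n, x n * y n‖ = ‖(inner ℂ X Y : ℂ)‖ := by rw [hinner]
    _ ≤ ‖X‖ * ‖Y‖ := norm_inner_le_norm X Y
    _ = _ := by rw [hX, hY]

end JW

namespace JW

variable (a b : ℕ → ℝ)

lemma tsum_tendsto_aux {u : ℕ → ℕ → ℂ} {f h : ℕ → ℂ}
    (hsumk : ∀ k, Summable fun n => u k n * h n)
    (hfh : Summable fun n => f n * h n)
    (hsum : ∀ k, Summable fun n => ‖u k n - f n‖ ^ 2)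
    (hlim : Tendsto (fun k => ∑' n, ‖u k n - f n‖ ^ 2) atTop (𝓝 0))
    (hh : L2 h) :
    Tendsto (fun k => ∑' n, u k n * h n) atTop (𝓝 (∑' n, f n * h n)) := by
  rw [tendsto_iff_norm_sub_tendsto_zero]
  have key : ∀ k, (∑' n, u k n * h n) - (∑' n, f n * h n)
      = ∑' n, (u k n - f n) * h n := by
    intro k
    rw [← Summable.tsum_sub (hsumk k) hfh]
    apply tsum_congr; intro n; ring
  have bound : ∀ k, ‖(∑' n, u k n * h n) - (∑' n, f n * h n)‖
      ≤ Real.sqrt (∑' n, ‖u k n - f n‖ ^ 2) * Real.sqrt (∑' n, ‖h n‖ ^ 2) := by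
    intro k
    rw [key k]
    exact tsum_mul_bound (hsum k) hh
  apply squeeze_zero (fun k => norm_nonneg _) bound
  have : Tendsto (fun k => Real.sqrt (∑' n, ‖u k n - f n‖ ^ 2)) atTop (𝓝 0) := by
    have := hlim.sqrt
    simpa using this
  simpa using this.mul_const (Real.sqrt (∑' n, ‖h n‖ ^ 2))

lemma graph_pairing {f g : ℕ → ℂ} (hg : jacobiGraph a b f g) (h : ℕ → ℂ)
    (hh : L2 h) (hjh : L2 (jacobiMul a b h)) :
    ∑' n, g n * h n = ∑' n, f n * jacobiMul a b h n := by
  have hl2 := graph_l2 a b hg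
  obtain ⟨u, hfin, hsum1, hlim1, hsum2, hlim2⟩ := hg
  have key : ∀ k, ∑' n, jacobiMul a b (u k) n * h n = ∑' n, u k n * jacobiMul a b h n :=
    fun k => finGreen a b (hfin k) h
  have sfin : ∀ k, Summable fun n => jacobiMul a b (u k) n * h n := fun k =>
    (L2.of_finite (support_jm_finite a b (hfin k))).summable_mul hh
  have sfin2 : ∀ k, Summable fun n => u k n * jacobiMul a b h n := fun k =>
    (L2.of_finite (hfin k)).summable_mul hjh
  have t1 : Tendsto (fun k => ∑' n, jacobiMul a b (u k) n * h n) atTop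
      (𝓝 (∑' n, g n * h n)) :=
    tsum_tendsto_aux sfin (hl2.2.summable_mul hh) hsum2 hlim2 hh
  have t2 : Tendsto (fun k => ∑' n, u k n * jacobiMul a b h n) atTop
      (𝓝 (∑' n, f n * jacobiMul a b h n)) :=
    tsum_tendsto_aux sfin2 (hl2.1.summable_mul hjh) hsum1 hlim1 hjh
  exact tendsto_nhds_unique (t1.congr key) t2

lemma Wlim_graph_zero {f g : ℕ → ℂ} (hg : jacobiGraph a b f g) (h : ℕ → ℂ)
    (hh : L2 h) (hjh : L2 (jacobiMul a b h)) :
    Wlim a b f h = 0 := by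
  have hl2 := graph_l2 a b hg
  have hjf : jacobiMul a b f = g := graph_jm a b hg
  unfold Wlim W2
  rw [Summable.tsum_sub (by rw [hjf]; exact hl2.2.summable_mul hh) (hl2.1.summable_mul hjh)]
  rw [hjf, graph_pairing a b hg h hh hjh]
  ring

end JW

namespace JW

variable (S : JacobiSetup)

lemma Wlim_all_zero {f : ℕ → ℂ} (hf : L2 f) (hjf : L2 (jacobiMul S.a S.b f))
    (h1 : Wlim S.a S.b f (P S 0) = 0) (h2 : Wlim S.a S.b f (Q S 0) = 0)
    {h : ℕ → ℂ} (hh : L2 h) (hjh : L2 (jacobiMul S.a S.b h)) :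
    Wlim S.a S.b f h = 0 := by
  have tfh := tendsto_Wr S.a S.b (W2_summable S.a S.b hf hjf hh hjh)
  have tfp := tendsto_Wr S.a S.b (W2_summable S.a S.b hf hjf (l2P S 0) (l2JP S 0))
  have tfq := tendsto_Wr S.a S.b (W2_summable S.a S.b hf hjf (l2Q S 0) (l2JQ S 0))
  have thp := tendsto_Wr S.a S.b (W2_summable S.a S.b hh hjh (l2P S 0) (l2JP S 0))
  have thq := tendsto_Wr S.a S.b (W2_summable S.a S.b hh hjh (l2Q S 0) (l2JQ S 0))
  rw [h1] at tfp
  rw [h2] at tfq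
  have trhs : Tendsto (fun n => Wr S.a f (P S 0) n * Wr S.a h (Q S 0) n
      - Wr S.a f (Q S 0) n * Wr S.a h (P S 0) n) atTop (𝓝 0) := by
    have := (tfp.mul thq).sub (tfq.mul thp)
    simpa using this
  have tneg : Tendsto (fun n => - Wr S.a f h n) atTop (𝓝 (- Wlim S.a S.b f h)) := tfh.neg
  have heq : (fun n => - Wr S.a f h n) = fun n => Wr S.a f (P S 0) n * Wr S.a h (Q S 0) n
      - Wr S.a f (Q S 0) n * Wr S.a h (P S 0) n := by
    funext n
    rw [← pluecker S.a f h (P S 0) (Q S 0) n, Wr_P0_Q0 S n]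
    ring
  rw [heq] at tneg
  have := tendsto_nhds_unique tneg trhs
  simpa [neg_eq_zero] using this

lemma pairing_of_Wlim_zero {f h : ℕ → ℂ} (hf : L2 f) (hjf : L2 (jacobiMul S.a S.b f))
    (hh : L2 h) (hjh : L2 (jacobiMul S.a S.b h)) (hw : Wlim S.a S.b f h = 0) :
    ∑' n, jacobiMul S.a S.b f n * h n = ∑' n, f n * jacobiMul S.a S.b h n := by
  unfold Wlim W2 at hw
  rw [Summable.tsum_sub (hjf.summable_mul hh) (hf.summable_mul hjh)] at hw
  exact sub_eq_zero.mp hw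

end JW

namespace JW

/-- the product Hilbert space -/
abbrev E2 : Type := WithLp 2 (Hl2 × Hl2)

variable (a b : ℕ → ℝ)

/-- packaged pair -/
def mkE (f g : ℕ → ℂ) (hf : L2 f) (hg : L2 g) : E2 :=
  (WithLp.equiv 2 (Hl2 × Hl2)).symm (mkl2 f hf, mkl2 g hg)

lemma mkE_fst (f g : ℕ → ℂ) (hf : L2 f) (hg : L2 g) : (mkE f g hf hg).fst = mkl2 f hf :=
  rfl
lemma mkE_snd (f g : ℕ → ℂ) (hf : L2 f) (hg : L2 g) : (mkE f g hf hg).snd = mkl2 g hg :=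
  rfl

lemma mkl2_add (f g : ℕ → ℂ) (hf : L2 f) (hg : L2 g) :
    mkl2 f hf + mkl2 g hg = mkl2 (fun n => f n + g n) (hf.add hg) := by
  apply lp.ext
  rw [lp.coeFn_add]
  rfl

lemma mkl2_smul (c : ℂ) (f : ℕ → ℂ) (hf : L2 f) :
    c • mkl2 f hf = mkl2 (fun n => c * f n) (hf.const_mul c) := by
  apply lp.ext
  rw [lp.coeFn_smul]
  rfl

/-- the graph of `J` on finitely supported sequences, as a linear map into `E2` -/
def Phi : (ℕ →₀ ℂ) →ₗ[ℂ] E2 where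
  toFun u := mkE (u : ℕ → ℂ) (jacobiMul a b u) (L2.of_finite u.finite_support)
    (L2.of_finite (support_jm_finite a b u.finite_support))
  map_add' u v := by
    unfold mkE
    rw [WithLp.equiv_symm_apply, ← WithLp.toLp_add]
    congr 1
    refine Prod.ext ?_ ?_
    · simp only [WithLp.toLp_fst, Prod.fst_add]
      rw [mkl2_add]
      apply lp.ext
      funext n
      show ((u + v : ℕ →₀ ℂ) : ℕ → ℂ) n = u n + v n
      simp
    · simp only [WithLp.toLp_snd, Prod.snd_add]
      rw [mkl2_add]
      apply lp.ext
      funext n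
      show jacobiMul a b (↑(u + v)) n = jacobiMul a b (↑u) n + jacobiMul a b (↑v) n
      have h : ((u + v : ℕ →₀ ℂ) : ℕ → ℂ) = fun m => u m + v m := by
        funext m; simp
      rw [h, jm_add]
  map_smul' c u := by
    unfold mkE
    rw [RingHom.id_apply, WithLp.equiv_symm_apply, ← WithLp.toLp_smul]
    congr 1
    refine Prod.ext ?_ ?_
    · simp only [WithLp.toLp_fst, Prod.smul_fst]
      rw [mkl2_smul]
      apply lp.ext
      funext n
      show ((c • u : ℕ →₀ ℂ) : ℕ → ℂ) n = c * u n
      simp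
    · simp only [WithLp.toLp_snd, Prod.smul_snd]
      rw [mkl2_smul]
      apply lp.ext
      funext n
      show jacobiMul a b (↑(c • u)) n = c * jacobiMul a b (↑u) n
      have h : ((c • u : ℕ →₀ ℂ) : ℕ → ℂ) = fun m => c * u m := by
        funext m; simp
      rw [h, jm_smul]

end JW

namespace JW

variable (a b : ℕ → ℝ)

lemma L2.neg {f : ℕ → ℂ} (hf : L2 f) : L2 fun n => - f n := by
  unfold L2 at *
  simpa using hf

lemma lp_inner (x y : Hl2) : (inner ℂ x y : ℂ) = ∑' n, (starRingEnd ℂ) (x n) * y n := by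
  rw [lp.inner_eq_tsum]; exact tsum_congr fun n => by rw [RCLike.inner_apply]; ring

lemma norm_sub_sq_l2 (p q : Hl2) : ‖p - q‖ ^ 2 = ∑' n, ‖p n - q n‖ ^ 2 := by
  rw [lp_norm_sq]
  apply tsum_congr
  intro n
  rw [lp.coeFn_sub, Pi.sub_apply]

lemma Phi_fst (u : ℕ →₀ ℂ) :
    (Phi a b u).fst = mkl2 (u : ℕ → ℂ) (L2.of_finite u.finite_support) :=
  rfl

lemma Phi_snd (u : ℕ →₀ ℂ) :
    (Phi a b u).snd = mkl2 (jacobiMul a b (u : ℕ → ℂ))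
      (L2.of_finite (support_jm_finite a b u.finite_support)) :=
  rfl

set_option synthInstance.maxHeartbeats 1000000 in
set_option maxHeartbeats 1000000 in
lemma graph_of_pairing {f : ℕ → ℂ} (hf : L2 f) (hjf : L2 (jacobiMul a b f))
    (hp : ∀ h : ℕ → ℂ, L2 h → L2 (jacobiMul a b h) →
      ∑' n, jacobiMul a b f n * h n = ∑' n, f n * jacobiMul a b h n) :
    jacobiGraph a b f (jacobiMul a b f) := by
  classical
  set G : Submodule ℂ E2 := LinearMap.range (Phi a b) with hG
  set x : E2 := mkE f (jacobiMul a b f) hf hjf with hxdef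
  -- step 1 : x ∈ Gᗮᗮ
  have hx : x ∈ Gᗮᗮ := by
    rw [Submodule.mem_orthogonal]
    intro w hw
    rw [Submodule.mem_orthogonal] at hw
    set X : Hl2 := w.fst with hX
    set Y : Hl2 := w.snd with hY
    -- coordinate identities
    have key : ∀ m : ℕ, (X : ℕ → ℂ) m + jacobiMul a b (Y : ℕ → ℂ) m = 0 := by
      intro m
      set δ : ℕ →₀ ℂ := Finsupp.single m 1 with hδ
      have hmem : Phi a b δ ∈ G := ⟨δ, rfl⟩
      have h0 := hw _ hmem
      rw [WithLp.prod_inner_apply] at h0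
      change inner ℂ (Phi a b δ).fst X + inner ℂ (Phi a b δ).snd Y = 0 at h0
      have hA : (inner ℂ (Phi a b δ).fst X : ℂ) = (X : ℕ → ℂ) m := by
        rw [Phi_fst, lp_inner]
        rw [tsum_eq_single m ?_]
        · show (starRingEnd ℂ) ((δ : ℕ → ℂ) m) * (X : ℕ → ℂ) m = _
          simp [hδ]
        · intro n hn
          show (starRingEnd ℂ) ((δ : ℕ → ℂ) n) * (X : ℕ → ℂ) n = 0
          simp [hδ, Finsupp.single_apply, Ne.symm hn]
      have hstar : ∀ n, (starRingEnd ℂ) (jacobiMul a b (δ : ℕ → ℂ) n)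
          = jacobiMul a b (δ : ℕ → ℂ) n := by
        intro n
        have hsδ : (fun m' => star ((δ : ℕ → ℂ) m')) = (δ : ℕ → ℂ) := by
          funext m'
          simp [hδ, Finsupp.single_apply, apply_ite star]
        have h2 := jm_star a b (fun m' => (δ : ℕ → ℂ) m') n
        rw [hsδ] at h2
        exact h2.symm
      have hB : (inner ℂ (Phi a b δ).snd Y : ℂ) = jacobiMul a b (Y : ℕ → ℂ) m := by
        rw [Phi_snd, lp_inner]
        have h1 : ∀ n, (starRingEnd ℂ) ((mkl2 (jacobiMul a b (δ : ℕ → ℂ))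
            (L2.of_finite (support_jm_finite a b δ.finite_support))) n) * (Y : ℕ → ℂ) n
            = jacobiMul a b (δ : ℕ → ℂ) n * (Y : ℕ → ℂ) n := by
          intro n
          show (starRingEnd ℂ) (jacobiMul a b (δ : ℕ → ℂ) n) * (Y : ℕ → ℂ) n = _
          rw [hstar]
        rw [tsum_congr h1, finGreen a b δ.finite_support]
        rw [tsum_eq_single m ?_]
        · simp [hδ]
        · intro n hn
          simp [hδ, Finsupp.single_apply, Ne.symm hn]
      rw [hA, hB] at h0
      exact h0
    have hXY : ∀ m, (X : ℕ → ℂ) m = - jacobiMul a b (Y : ℕ → ℂ) m := by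
      intro m
      have := key m
      linear_combination this
    have hYl2 : L2 (Y : ℕ → ℂ) := (l2_iff _).1 (lp.memℓp Y)
    have hJYl2 : L2 (jacobiMul a b (Y : ℕ → ℂ)) := by
      have hXl2 : L2 (X : ℕ → ℂ) := (l2_iff _).1 (lp.memℓp X)
      have : (jacobiMul a b (Y : ℕ → ℂ)) = fun m => - (X : ℕ → ℂ) m := by
        funext m
        rw [hXY m]; ring
      rw [this]
      exact hXl2.neg
    -- apply the pairing hypothesis with h = conj Y
    have hYs : L2 (fun n => star ((Y : ℕ → ℂ) n)) := hYl2.star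
    have hJYs : L2 (jacobiMul a b (fun n => star ((Y : ℕ → ℂ) n))) := by
      have : jacobiMul a b (fun n => star ((Y : ℕ → ℂ) n))
          = fun n => star (jacobiMul a b (Y : ℕ → ℂ) n) := funext fun n => jm_star a b _ n
      rw [this]
      exact hJYl2.star
    have hpair := hp _ hYs hJYs
    -- now compute the inner product
    rw [WithLp.prod_inner_apply]
    change inner ℂ X x.fst + inner ℂ Y x.snd = 0
    have hx1 : x.fst = mkl2 f hf := mkE_fst _ _ _ _
    have hx2 : x.snd = mkl2 (jacobiMul a b f) hjf := mkE_snd _ _ _ _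
    rw [hx1, hx2, lp_inner, lp_inner]
    have e1 : ∀ n, (starRingEnd ℂ) ((X : ℕ → ℂ) n) * (mkl2 f hf) n
        = f n * star ((X : ℕ → ℂ) n) := fun n => mul_comm _ _
    have e2 : ∀ n, (starRingEnd ℂ) ((Y : ℕ → ℂ) n) * (mkl2 (jacobiMul a b f) hjf) n
        = jacobiMul a b f n * star ((Y : ℕ → ℂ) n) := fun n => mul_comm _ _
    rw [tsum_congr e1, tsum_congr e2, hpair]
    have e3 : ∀ n, f n * jacobiMul a b (fun n' => star ((Y : ℕ → ℂ) n')) n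
        = - (f n * star ((X : ℕ → ℂ) n)) := by
      intro n
      rw [jm_star, hXY n]
      simp
    rw [tsum_congr e3, tsum_neg]
    ring
  -- step 2 : x is in the closure
  have hx3 : x ∈ G.topologicalClosure := by
    rw [← Submodule.orthogonal_orthogonal_eq_closure]
    exact hx
  have hx4 : x ∈ closure (G : Set E2) := by
    rw [← Submodule.topologicalClosure_coe]
    exact hx3
  obtain ⟨z, hzmem, hzlim⟩ := mem_closure_iff_seq_limit.mp hx4
  have hu : ∀ k, ∃ u : ℕ →₀ ℂ, Phi a b u = z k := fun k => hzmem k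
  choose U hU using hu
  -- norms of components
  have hnorm : Tendsto (fun k => ‖z k - x‖) atTop (𝓝 0) :=
    tendsto_iff_norm_sub_tendsto_zero.mp hzlim
  have hsq : Tendsto (fun k => ‖z k - x‖ ^ 2) atTop (𝓝 0) := by
    have := hnorm.pow 2
    simpa using this
  have hfst : ∀ k, (∑' n, ‖(U k : ℕ → ℂ) n - f n‖ ^ 2) = ‖(z k - x).fst‖ ^ 2 := by
    intro k
    rw [WithLp.sub_fst, ← hU k, Phi_fst]
    have hx1 : x.fst = mkl2 f hf := mkE_fst _ _ _ _
    rw [hx1, norm_sub_sq_l2]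
    apply tsum_congr
    intro n
    rfl
  have hsnd : ∀ k, (∑' n, ‖jacobiMul a b (U k : ℕ → ℂ) n - jacobiMul a b f n‖ ^ 2)
      = ‖(z k - x).snd‖ ^ 2 := by
    intro k
    rw [WithLp.sub_snd, ← hU k, Phi_snd]
    have hx2 : x.snd = mkl2 (jacobiMul a b f) hjf := mkE_snd _ _ _ _
    rw [hx2, norm_sub_sq_l2]
    apply tsum_congr
    intro n
    rfl
  have hboundf : ∀ k, (∑' n, ‖(U k : ℕ → ℂ) n - f n‖ ^ 2) ≤ ‖z k - x‖ ^ 2 := by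
    intro k
    rw [hfst k, WithLp.prod_norm_sq_eq_of_L2]
    nlinarith [sq_nonneg ‖(z k - x).snd‖]
  have hbounds : ∀ k, (∑' n, ‖jacobiMul a b (U k : ℕ → ℂ) n - jacobiMul a b f n‖ ^ 2)
      ≤ ‖z k - x‖ ^ 2 := by
    intro k
    rw [hsnd k, WithLp.prod_norm_sq_eq_of_L2]
    nlinarith [sq_nonneg ‖(z k - x).fst‖]
  refine ⟨fun k => (U k : ℕ → ℂ), fun k => (U k).finite_support, ?_, ?_, ?_, ?_⟩
  · exact fun k => (L2.of_finite (U k).finite_support).sub hf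
  · apply squeeze_zero (fun k => tsum_nonneg (fun n => sq_nonneg _)) hboundf hsq
  · exact fun k => (L2.of_finite (support_jm_finite a b (U k).finite_support)).sub hjf
  · apply squeeze_zero (fun k => tsum_nonneg (fun n => sq_nonneg _)) hbounds hsq

end JW

namespace JW

variable (a b : ℕ → ℝ)

lemma jm_comb (α β : ℂ) (f h₁ h₂ : ℕ → ℂ) (n : ℕ) :
    jacobiMul a b (fun m => f m + α * h₁ m + β * h₂ m) n
      = jacobiMul a b f n + α * jacobiMul a b h₁ n + β * jacobiMul a b h₂ n := by
  cases n <;> simp [jacobiMul] <;> ring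

lemma jm_comb2 (t : ℂ) (q p : ℕ → ℂ) (n : ℕ) :
    jacobiMul a b (fun m => q m + t * p m) n
      = jacobiMul a b q n + t * jacobiMul a b p n := by
  cases n <;> simp [jacobiMul] <;> ring

lemma W2_comb_left (α β : ℂ) (f h₁ h₂ v : ℕ → ℂ) (n : ℕ) :
    W2 a b (fun m => f m + α * h₁ m + β * h₂ m) v n
      = W2 a b f v n + α * W2 a b h₁ v n + β * W2 a b h₂ v n := by
  unfold W2
  rw [jm_comb]
  ring

lemma W2_add_right (t : ℂ) (f q p : ℕ → ℂ) (n : ℕ) :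
    W2 a b f (fun m => q m + t * p m) n = W2 a b f q n + t * W2 a b f p n := by
  unfold W2
  rw [jm_comb2]
  ring

lemma Wlim_comb_left (α β : ℂ) {f h₁ h₂ v : ℕ → ℂ}
    (hf : L2 f) (hjf : L2 (jacobiMul a b f)) (h1 : L2 h₁) (hj1 : L2 (jacobiMul a b h₁))
    (h2 : L2 h₂) (hj2 : L2 (jacobiMul a b h₂)) (hv : L2 v) (hjv : L2 (jacobiMul a b v)) :
    Wlim a b (fun m => f m + α * h₁ m + β * h₂ m) v
      = Wlim a b f v + α * Wlim a b h₁ v + β * Wlim a b h₂ v := by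
  unfold Wlim
  rw [tsum_congr (W2_comb_left a b α β f h₁ h₂ v)]
  rw [Summable.tsum_add ((W2_summable a b hf hjf hv hjv).add
    ((W2_summable a b h1 hj1 hv hjv).mul_left α)) ((W2_summable a b h2 hj2 hv hjv).mul_left β),
    Summable.tsum_add (W2_summable a b hf hjf hv hjv) ((W2_summable a b h1 hj1 hv hjv).mul_left α),
    tsum_mul_left, tsum_mul_left]

lemma Wlim_add_right (t : ℂ) {f q p : ℕ → ℂ}
    (hf : L2 f) (hjf : L2 (jacobiMul a b f)) (hq : L2 q) (hjq : L2 (jacobiMul a b q))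
    (hp : L2 p) (hjp : L2 (jacobiMul a b p)) :
    Wlim a b f (fun m => q m + t * p m) = Wlim a b f q + t * Wlim a b f p := by
  unfold Wlim
  rw [tsum_congr (W2_add_right a b t f q p)]
  rw [Summable.tsum_add (W2_summable a b hf hjf hq hjq) ((W2_summable a b hf hjf hp hjp).mul_left t),
    tsum_mul_left]

lemma fwd_master {w v s : ℕ → ℂ} {c : ℂ}
    (hv : L2 v) (hjv : L2 (jacobiMul a b v))
    (hs : inDomT a b s) (hd : ∀ n, w n = s n + c * v n) :
    Wlim a b w v = 0 := by
  obtain ⟨g, hg⟩ := hs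
  have hw : w = fun n => s n + c * v n := funext hd
  subst hw
  have key : ∀ n, W2 a b (fun n => s n + c * v n) v n = W2 a b s v n := by
    intro n
    unfold W2
    rw [jm_comb2]
    ring
  unfold Wlim
  rw [tsum_congr key]
  exact Wlim_graph_zero a b hg v hv hjv

end JW

namespace JW

variable (S : JacobiSetup)

lemma nevD00 : Wlim S.a S.b (P S 0) (P S 0) = 0 := by
  rw [WlimPP]; simp [nevD]

lemma nevC00 : Wlim S.a S.b (Q S 0) (P S 0) = 1 := by
  rw [WlimQP]; simp [nevC]

lemma nevB00 : Wlim S.a S.b (P S 0) (Q S 0) = -1 := by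
  rw [WlimPQ]; simp [nevB]

lemma nevA00 : Wlim S.a S.b (Q S 0) (Q S 0) = 0 := by
  rw [WlimQQ]; simp [nevA]

lemma crux_graph {w : ℕ → ℂ} (hw : L2 w) (hjw : L2 (jacobiMul S.a S.b w)) (α β : ℂ)
    (h1 : Wlim S.a S.b w (P S 0) = - β) (h2 : Wlim S.a S.b w (Q S 0) = α) :
    inDomT S.a S.b (fun n => w n + α * P S 0 n + β * Q S 0 n) := by
  set s : ℕ → ℂ := fun n => w n + α * P S 0 n + β * Q S 0 n with hs
  have hsl2 : L2 s := (hw.add ((l2P S 0).const_mul α)).add ((l2Q S 0).const_mul β)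
  have hjs : L2 (jacobiMul S.a S.b s) := by
    have : jacobiMul S.a S.b s = fun n => jacobiMul S.a S.b w n
        + α * jacobiMul S.a S.b (P S 0) n + β * jacobiMul S.a S.b (Q S 0) n :=
      funext fun n => jm_comb S.a S.b α β w (P S 0) (Q S 0) n
    rw [this]
    exact (hjw.add ((l2JP S 0).const_mul α)).add ((l2JQ S 0).const_mul β)
  have hwp : Wlim S.a S.b s (P S 0) = 0 := by
    rw [hs, Wlim_comb_left S.a S.b α β hw hjw (l2P S 0) (l2JP S 0) (l2Q S 0) (l2JQ S 0)
      (l2P S 0) (l2JP S 0), h1, nevD00, nevC00]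
    ring
  have hwq : Wlim S.a S.b s (Q S 0) = 0 := by
    rw [hs, Wlim_comb_left S.a S.b α β hw hjw (l2P S 0) (l2JP S 0) (l2Q S 0) (l2JQ S 0)
      (l2Q S 0) (l2JQ S 0), h2, nevB00, nevA00]
    ring
  refine ⟨jacobiMul S.a S.b s, graph_of_pairing S.a S.b hsl2 hjs ?_⟩
  intro h hh hjh
  exact pairing_of_Wlim_zero S hsl2 hjs hh hjh (Wlim_all_zero S hsl2 hjs hwp hwq hh hjh)

end JW


/-- Membership of `𝔭_λ` and `𝔮_λ` in `D(T) ⊕ ℂ(𝔮₀ + t𝔭₀)` (the domain of the self-adjoint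
extension `T_t`) is characterized by `B(λ) + tD(λ) = 0` resp. `A(λ) + tC(λ) = 0`; for the
extension with defect vector `𝔭₀` the conditions are `D(λ) = 0` resp. `C(λ) = 0`. -/
theorem stmt10 (S : JacobiSetup) (lam : ℂ) :
    (∀ t : ℝ,
      ((∃ (s : ℕ → ℂ) (c : ℂ), inDomT S.a S.b s ∧
          ∀ n, S.p n lam = s n + c * (S.q n 0 + (t : ℂ) * S.p n 0)) ↔
        nevB S lam 0 + (t : ℂ) * nevD S lam 0 = 0) ∧
      ((∃ (s : ℕ → ℂ) (c : ℂ), inDomT S.a S.b s ∧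
          ∀ n, S.q n lam = s n + c * (S.q n 0 + (t : ℂ) * S.p n 0)) ↔
        nevA S lam 0 + (t : ℂ) * nevC S lam 0 = 0)) ∧
    ((∃ (s : ℕ → ℂ) (c : ℂ), inDomT S.a S.b s ∧
        ∀ n, S.p n lam = s n + c * S.p n 0) ↔ nevD S lam 0 = 0) ∧
    ((∃ (s : ℕ → ℂ) (c : ℂ), inDomT S.a S.b s ∧
        ∀ n, S.q n lam = s n + c * S.p n 0) ↔ nevC S lam 0 = 0) := by
  classical
  open JW in
  have hv0 : ∀ t : ℝ, L2 (fun n => Q S 0 n + (t : ℂ) * P S 0 n) :=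
    fun t => (l2Q S 0).add ((l2P S 0).const_mul t)
  have hjv0 : ∀ t : ℝ, L2 (jacobiMul S.a S.b (fun n => Q S 0 n + (t : ℂ) * P S 0 n)) := by
    intro t
    have : jacobiMul S.a S.b (fun n => Q S 0 n + (t : ℂ) * P S 0 n)
        = fun n => jacobiMul S.a S.b (Q S 0) n + (t : ℂ) * jacobiMul S.a S.b (P S 0) n :=
      funext fun n => jm_comb2 S.a S.b _ _ _ n
    rw [this]
    exact (l2JQ S 0).add ((l2JP S 0).const_mul t)
  refine ⟨fun t => ⟨⟨?_, ?_⟩, ⟨?_, ?_⟩⟩, ⟨?_, ?_⟩, ⟨?_, ?_⟩⟩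
  · -- p, t : forward
    rintro ⟨s, c, hs, hd⟩
    have h0 := fwd_master S.a S.b (w := P S lam)
      (v := fun n => Q S 0 n + (t : ℂ) * P S 0 n) (hv0 t) (hjv0 t) hs (fun n => hd n)
    rw [Wlim_add_right S.a S.b (t : ℂ) (l2P S lam) (l2JP S lam) (l2Q S 0) (l2JQ S 0)
      (l2P S 0) (l2JP S 0), WlimPQ, WlimPP] at h0
    exact h0
  · -- p, t : backward
    intro heq
    refine ⟨fun n => P S lam n + (nevB S lam 0) * P S 0 n + (- nevD S lam 0) * Q S 0 n,
      nevD S lam 0,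
      crux_graph S (l2P S lam) (l2JP S lam) (nevB S lam 0) (- nevD S lam 0)
        (by rw [WlimPP]; ring) (by rw [WlimPQ]), ?_⟩
    intro n
    show S.p n lam = (S.p n lam + nevB S lam 0 * S.p n 0 + (- nevD S lam 0) * S.q n 0)
      + nevD S lam 0 * (S.q n 0 + (t : ℂ) * S.p n 0)
    linear_combination (- S.p n 0) * heq
  · -- q, t : forward
    rintro ⟨s, c, hs, hd⟩
    have h0 := fwd_master S.a S.b (w := Q S lam)
      (v := fun n => Q S 0 n + (t : ℂ) * P S 0 n) (hv0 t) (hjv0 t) hs (fun n => hd n)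
    rw [Wlim_add_right S.a S.b (t : ℂ) (l2Q S lam) (l2JQ S lam) (l2Q S 0) (l2JQ S 0)
      (l2P S 0) (l2JP S 0), WlimQQ, WlimQP] at h0
    exact h0
  · -- q, t : backward
    intro heq
    refine ⟨fun n => Q S lam n + (nevA S lam 0) * P S 0 n + (- nevC S lam 0) * Q S 0 n,
      nevC S lam 0,
      crux_graph S (l2Q S lam) (l2JQ S lam) (nevA S lam 0) (- nevC S lam 0)
        (by rw [WlimQP]; ring) (by rw [WlimQQ]), ?_⟩
    intro n
    show S.q n lam = (S.q n lam + nevA S lam 0 * S.p n 0 + (- nevC S lam 0) * S.q n 0)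
      + nevC S lam 0 * (S.q n 0 + (t : ℂ) * S.p n 0)
    linear_combination (- S.p n 0) * heq
  · -- p, P0 : forward
    rintro ⟨s, c, hs, hd⟩
    have h0 := fwd_master S.a S.b (w := P S lam) (v := P S 0)
      (l2P S 0) (l2JP S 0) hs (fun n => hd n)
    rw [WlimPP] at h0
    exact h0
  · -- p, P0 : backward
    intro heq
    refine ⟨fun n => P S lam n + (nevB S lam 0) * P S 0 n + (- nevD S lam 0) * Q S 0 n,
      - nevB S lam 0,
      crux_graph S (l2P S lam) (l2JP S lam) (nevB S lam 0) (- nevD S lam 0)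
        (by rw [WlimPP]; ring) (by rw [WlimPQ]), ?_⟩
    intro n
    show S.p n lam = (S.p n lam + nevB S lam 0 * S.p n 0 + (- nevD S lam 0) * S.q n 0)
      + (- nevB S lam 0) * S.p n 0
    linear_combination (S.q n 0) * heq
  · -- q, P0 : forward
    rintro ⟨s, c, hs, hd⟩
    have h0 := fwd_master S.a S.b (w := Q S lam) (v := P S 0)
      (l2P S 0) (l2JP S 0) hs (fun n => hd n)
    rw [WlimQP] at h0
    exact h0
  · -- q, P0 : backward
    intro heq
    refine ⟨fun n => Q S lam n + (nevA S lam 0) * P S 0 n + (- nevC S lam 0) * Q S 0 n,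
      - nevA S lam 0,
      crux_graph S (l2Q S lam) (l2JQ S lam) (nevA S lam 0) (- nevC S lam 0)
        (by rw [WlimQP]; ring) (by rw [WlimQQ]), ?_⟩
    intro n
    show S.q n lam = (S.q n lam + nevA S lam 0 * S.p n 0 + (- nevC S lam 0) * S.q n 0)
      + (- nevA S lam 0) * S.p n 0
    linear_combination (S.q n 0) * heq
end
end
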